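/- arXiv:2102.03892 — 7 statements merged into one kernel-verified Lean document; each statement's English description precedes it below -/
import Mathlib

section
/- For all integers 1 ≤ s ≤ D ≤ p, the probability that a hierarchical-uniform subspace S contains a fixed set S̄ of size s satisfies P(S ⊇ S̄) = D^{-1} Σ_{d=s}^{D} binom(p−s, d−s)/binom(p,d) = binom(D+1, s+1)/(D · binom(p,s)). In particular, for s = 1 (a single feature j), P(j ∈ S) = (D+1)/(2p). -/
open MeasureTheory ProbabilityTheory Filter

noncomputable section

instance (p : ℕ) : MeasurableSpace (Finset (Fin p)) := ⊤


lemma meas_finset_sum {α : Type*} [MeasurableSpace α] (hm : ∀ s : Set α, MeasurableSet s)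
    (ν : Measure α) (F : Finset α) : ν ↑F = ∑ a ∈ F, ν {a} := by
  classical
  have h : (↑F : Set α) = ⋃ a ∈ F, ({a} : Set α) := by ext x; simp
  rw [h, measure_biUnion_finset ?_ (fun a _ => hm {a})]
  intro a _ b _ hab
  simp [Set.disjoint_singleton, hab]

lemma card_supersets {p : ℕ} (Sbar : Finset (Fin p)) (d : ℕ) (hd : Sbar.card ≤ d) :
    (Finset.univ.filter fun A : Finset (Fin p) => Sbar ⊆ A ∧ A.card = d).card
      = (p - Sbar.card).choose (d - Sbar.card) := by
  classical
  have hcompl : (Sbarᶜ : Finset (Fin p)).card = p - Sbar.card := by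
    simp [Finset.card_compl]
  rw [← hcompl, ← Finset.card_powersetCard]
  apply Finset.card_bij' (fun A _ => A \ Sbar) (fun B _ => Sbar ∪ B)
  · intro A hA
    simp only [Finset.mem_filter, Finset.mem_univ, true_and] at hA
    rw [Finset.mem_powersetCard]
    constructor
    · intro x hx
      simp only [Finset.mem_sdiff] at hx
      simp [Finset.mem_compl, hx.2]
    · rw [Finset.card_sdiff_of_subset hA.1, hA.2]
  · intro B hB
    rw [Finset.mem_powersetCard] at hB
    have hdisj : Disjoint Sbar B := by
      rw [Finset.disjoint_left]
      intro x hx hxB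
      have := hB.1 hxB
      simp only [Finset.mem_compl] at this
      exact this hx
    simp only [Finset.mem_filter, Finset.mem_univ, true_and]
    refine ⟨Finset.subset_union_left, ?_⟩
    rw [Finset.card_union_of_disjoint hdisj, hB.2]
    omega
  · intro A hA
    simp only [Finset.mem_filter, Finset.mem_univ, true_and] at hA
    exact Finset.union_sdiff_of_subset hA.1
  · intro B hB
    rw [Finset.mem_powersetCard] at hB
    have hdisj : Disjoint Sbar B := by
      rw [Finset.disjoint_left]
      intro x hx hxB
      have := hB.1 hxB
      simp only [Finset.mem_compl] at this
      exact this hx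
    rw [Finset.union_sdiff_cancel_left hdisj]

lemma card_fiber (p d : ℕ) :
    (Finset.univ.filter fun A : Finset (Fin p) => A.card = d).card = p.choose d := by
  classical
  have h : (Finset.univ.filter fun A : Finset (Fin p) => A.card = d)
      = Finset.powersetCard d Finset.univ := by
    rw [Finset.powersetCard_eq_filter, Finset.powerset_univ]
  rw [h, Finset.card_powersetCard, Finset.card_univ, Fintype.card_fin]

lemma part2 (p D s : ℕ) (hsD : s ≤ D) (hDp : D ≤ p) :
    (1 / (D : ℝ)) * ∑ d ∈ Finset.Icc s D, ((p - s).choose (d - s) : ℝ) / (p.choose d)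
      = ((D + 1).choose (s + 1) : ℝ) / (D * (p.choose s)) := by
  have hps : (0:ℝ) < p.choose s := by exact_mod_cast Nat.choose_pos (hsD.trans hDp)
  have h1 : ∀ d ∈ Finset.Icc s D, ((p - s).choose (d - s) : ℝ) / (p.choose d)
      = (d.choose s : ℝ) / (p.choose s) := by
    intro d hd
    rw [Finset.mem_Icc] at hd
    have hdp : d ≤ p := hd.2.trans hDp
    have hpd : (0:ℝ) < p.choose d := by exact_mod_cast Nat.choose_pos hdp
    rw [div_eq_div_iff hpd.ne' hps.ne']
    have key := Nat.choose_mul (n := p) hd.1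
    have : (p.choose d * d.choose s : ℝ) = (p.choose s * ((p-s).choose (d-s)) : ℝ) := by
      exact_mod_cast congrArg (Nat.cast : ℕ → ℝ) key
    linarith
  rw [Finset.sum_congr rfl h1, ← Finset.sum_div, ← Nat.cast_sum, Nat.sum_Icc_choose,
    div_mul_div_comm, one_mul]

/-- For `1 ≤ s ≤ D ≤ p`, the probability that a hierarchical-uniform subspace
contains a fixed set `S̄` of size `s` equals
`D⁻¹ Σ_{d=s}^{D} C(p−s, d−s)/C(p,d) = C(D+1, s+1)/(D·C(p,s))`; in particular, for `s = 1`
it equals `(D+1)/(2p)`. -/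
theorem stmt_1 (p D s : ℕ) (hs : 1 ≤ s) (hsD : s ≤ D) (hDp : D ≤ p)
    (ν : Measure (Finset (Fin p))) [IsProbabilityMeasure ν]
    (hlaw : ∀ A : Finset (Fin p), 1 ≤ A.card → A.card ≤ D →
      ν {A} = ENNReal.ofReal (1 / (D * (p.choose A.card))))
    (Sbar : Finset (Fin p)) (hcard : Sbar.card = s) :
    ν {A | Sbar ⊆ A}
        = ENNReal.ofReal ((1 / (D : ℝ)) *
            ∑ d ∈ Finset.Icc s D, ((p - s).choose (d - s) : ℝ) / (p.choose d))
    ∧ (1 / (D : ℝ)) * ∑ d ∈ Finset.Icc s D, ((p - s).choose (d - s) : ℝ) / (p.choose d)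
        = ((D + 1).choose (s + 1) : ℝ) / (D * (p.choose s))
    ∧ (s = 1 →
        (1 / (D : ℝ)) * ∑ d ∈ Finset.Icc s D, ((p - s).choose (d - s) : ℝ) / (p.choose d)
          = (D + 1 : ℝ) / (2 * p)) := by
  classical
  have hm : ∀ t : Set (Finset (Fin p)), MeasurableSet t :=
    fun _ => MeasurableSpace.measurableSet_top
  have hD1 : 1 ≤ D := hs.trans hsD
  have hDR : (0:ℝ) < D := by exact_mod_cast hD1
  have hpR : (0:ℝ) < p := by exact_mod_cast hs.trans (hsD.trans hDp)
  refine ⟨?_, part2 p D s hsD hDp, ?_⟩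
  · -- Part 1
    set G := Finset.univ.filter (fun A : Finset (Fin p) => 1 ≤ A.card ∧ A.card ≤ D) with hGdef
    set T := Finset.univ.filter (fun A : Finset (Fin p) => Sbar ⊆ A ∧ A.card ≤ D) with hTdef
    -- sum over a filter by card, generic
    have fiber_sum : ∀ (P : Finset (Fin p) → Prop) [DecidablePred P] (lo : ℕ)
        (hP : ∀ A, P A → lo ≤ A.card ∧ A.card ≤ D),
        ∑ A ∈ Finset.univ.filter P, (1 / (D * (p.choose A.card)) : ℝ)
          = ∑ d ∈ Finset.Icc lo D,
              ((Finset.univ.filter fun A => P A ∧ A.card = d).card : ℝ)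
                * (1 / (D * (p.choose d))) := by
      intro P _ lo hP
      rw [← Finset.sum_fiberwise_of_maps_to (g := Finset.card) (t := Finset.Icc lo D)
        (fun A hA => by
          simp only [Finset.mem_filter, Finset.mem_univ, true_and] at hA
          exact Finset.mem_Icc.mpr (hP A hA))]
      apply Finset.sum_congr rfl
      intro d _
      have hset : (Finset.univ.filter P).filter (fun A => A.card = d)
          = Finset.univ.filter (fun A => P A ∧ A.card = d) := by
        rw [Finset.filter_filter]
      rw [hset]
      rw [Finset.sum_congr rfl (fun A hA => by
        simp only [Finset.mem_filter, Finset.mem_univ, true_and] at hA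
        rw [hA.2])]
      rw [Finset.sum_const, nsmul_eq_mul]
    -- measure of a filter set as ofReal of real sum
    have meas_filter : ∀ (P : Finset (Fin p) → Prop) [DecidablePred P]
        (hP : ∀ A, P A → 1 ≤ A.card ∧ A.card ≤ D),
        ν ↑(Finset.univ.filter P)
          = ENNReal.ofReal (∑ A ∈ Finset.univ.filter P, (1 / (D * (p.choose A.card)) : ℝ)) := by
      intro P _ hP
      rw [meas_finset_sum hm, ENNReal.ofReal_sum_of_nonneg (fun A _ => by positivity)]
      apply Finset.sum_congr rfl
      intro A hA
      simp only [Finset.mem_filter, Finset.mem_univ, true_and] at hA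
      exact hlaw A (hP A hA).1 (hP A hA).2
    -- ν G = 1
    have hG1 : ν ↑G = 1 := by
      rw [hGdef, meas_filter _ (fun A hA => hA),
        fiber_sum _ 1 (fun A hA => hA)]
      have : ∀ d ∈ Finset.Icc 1 D,
          ((Finset.univ.filter fun A : Finset (Fin p) => (1 ≤ A.card ∧ A.card ≤ D) ∧ A.card = d).card : ℝ)
            * (1 / (D * (p.choose d))) = 1 / D := by
        intro d hd
        rw [Finset.mem_Icc] at hd
        have hset : (Finset.univ.filter fun A : Finset (Fin p) =>
            (1 ≤ A.card ∧ A.card ≤ D) ∧ A.card = d)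
            = Finset.univ.filter fun A : Finset (Fin p) => A.card = d := by
          apply Finset.filter_congr
          intro A _
          constructor
          · exact fun h => h.2
          · intro h; exact ⟨⟨by omega, by omega⟩, h⟩
        have hpd : (0:ℝ) < p.choose d := by
          exact_mod_cast Nat.choose_pos (hd.2.trans hDp)
        rw [hset, card_fiber]
        field_simp
      rw [Finset.sum_congr rfl this, Finset.sum_const, Nat.card_Icc, nsmul_eq_mul]
      simp only [Nat.add_sub_cancel]
      rw [mul_one_div, div_self hDR.ne']
      simp
    have hGc : ν (↑G : Set (Finset (Fin p)))ᶜ = 0 := by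
      rw [measure_compl (hm _) (measure_ne_top ν _), hG1, measure_univ, tsub_self]
    -- reduce to T
    have hTle : ν {A | Sbar ⊆ A} = ν ↑T := by
      apply le_antisymm
      · have hsub : {A : Finset (Fin p) | Sbar ⊆ A} ⊆ ↑T ∪ (↑G : Set (Finset (Fin p)))ᶜ := by
          intro A hA
          simp only [Set.mem_setOf_eq] at hA
          by_cases hAD : A.card ≤ D
          · left
            simp only [hTdef, Finset.coe_filter, Set.mem_setOf_eq, Finset.mem_univ, true_and]
            exact ⟨hA, hAD⟩
          · right
            simp only [hGdef, Set.mem_compl_iff, Finset.coe_filter, Set.mem_setOf_eq,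
              Finset.mem_univ, true_and]
            omega
        calc ν {A | Sbar ⊆ A} ≤ ν (↑T ∪ (↑G : Set (Finset (Fin p)))ᶜ) := measure_mono hsub
          _ ≤ ν ↑T + ν (↑G : Set (Finset (Fin p)))ᶜ := measure_union_le _ _
          _ = ν ↑T := by rw [hGc, add_zero]
      · apply measure_mono
        intro A hA
        simp only [hTdef, Finset.coe_filter, Set.mem_setOf_eq, Finset.mem_univ, true_and] at hA
        exact hA.1
    -- compute ν T
    have hcard_ge : ∀ A : Finset (Fin p), Sbar ⊆ A → s ≤ A.card := by
      intro A h
      rw [← hcard]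
      exact Finset.card_le_card h
    rw [hTle, hTdef, meas_filter _ (fun A hA => ⟨hs.trans (hcard_ge A hA.1), hA.2⟩),
      fiber_sum _ s (fun A hA => ⟨hcard_ge A hA.1, hA.2⟩)]
    congr 1
    rw [Finset.mul_sum]
    apply Finset.sum_congr rfl
    intro d hd
    rw [Finset.mem_Icc] at hd
    have hset : (Finset.univ.filter fun A : Finset (Fin p) => (Sbar ⊆ A ∧ A.card ≤ D) ∧ A.card = d)
        = Finset.univ.filter fun A : Finset (Fin p) => Sbar ⊆ A ∧ A.card = d := by
      apply Finset.filter_congr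
      intro A _
      constructor
      · exact fun h => ⟨h.1.1, h.2⟩
      · intro h; exact ⟨⟨h.1, by omega⟩, h.2⟩
    rw [hset, card_supersets Sbar d (by omega : Sbar.card ≤ d), hcard]
    ring
  · -- Part 3
    intro hs1
    rw [part2 p D s hsD hDp, hs1, Nat.choose_one_right, Nat.cast_choose_two]
    push_cast
    field_simp
    ring

end
end

section
/- Fix an integer s ≥ 1 and consider sequences of integers D = D(n) and p = p(n) with s ≤ D ≤ p, D → ∞, and D/p → 0 as n → ∞. Then for any set S̄ of size s, the probability p_{S̄} that a hierarchical-uniform subspace contains S̄ satisfies p_{S̄} ≍ (D/p)^s: there exist constants 0 < c ≤ C (depending only on s) such that c·(D/p)^s ≤ p_{S̄} ≤ C·(D/p)^s for all sufficiently large n. -/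
open MeasureTheory Filter

noncomputable section

/-- `pHier p D s` is the probability that a hierarchical-uniform subspace of `{1,…,p}`
(with maximal size `D`) contains a fixed set of size `s`:
`p_{S̄} = D⁻¹ Σ_{d=s}^{D} C(p−s, d−s)/C(p,d)`. -/
def pHier (p D s : ℕ) : ℝ :=
  (1 / (D : ℝ)) * ∑ d ∈ Finset.Icc s D, ((p - s).choose (d - s) : ℝ) / (p.choose d)

lemma pHier_eq (p D s : ℕ) (hsD : s ≤ D) (hDp : D ≤ p) :
    pHier p D s = ((D + 1).choose (s + 1) : ℝ) / (D * p.choose s) := by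
  have hsp : s ≤ p := hsD.trans hDp
  have hps : (p.choose s : ℝ) ≠ 0 := Nat.cast_ne_zero.2 (Nat.choose_pos hsp).ne'
  have hsum : ∑ d ∈ Finset.Icc s D, ((p - s).choose (d - s) : ℝ) / (p.choose d)
      = ∑ d ∈ Finset.Icc s D, (d.choose s : ℝ) / (p.choose s) := by
    refine Finset.sum_congr rfl fun d hd => ?_
    obtain ⟨h1, h2⟩ := Finset.mem_Icc.1 hd
    have hdp : d ≤ p := h2.trans hDp
    have hpd : (p.choose d : ℝ) ≠ 0 := Nat.cast_ne_zero.2 (Nat.choose_pos hdp).ne'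
    rw [div_eq_div_iff hpd hps]
    have hnat : (p - s).choose (d - s) * p.choose s = d.choose s * p.choose d := by
      rw [mul_comm, ← Nat.choose_mul (n := p) h1, mul_comm]
    exact_mod_cast hnat
  unfold pHier
  rw [hsum, ← Finset.sum_div]
  have h2 : ∑ d ∈ Finset.Icc s D, (d.choose s : ℝ) = ((D + 1).choose (s + 1) : ℝ) := by
    exact_mod_cast congrArg (Nat.cast : ℕ → ℝ) (Nat.sum_Icc_choose D s)
  rw [h2]
  field_simp

lemma main_bound (s D p : ℕ) (hs : 1 ≤ s) (hD : 2 * s ≤ D) (hDp : D ≤ p) :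
    (1 / (2 ^ (s + 1) * ((s : ℝ) + 1))) * ((D : ℝ) / p) ^ s ≤ pHier p D s
    ∧ pHier p D s ≤ (2 ^ (2 * s + 1) / ((s : ℝ) + 1)) * ((D : ℝ) / p) ^ s := by
  have hsD : s ≤ D := le_trans (by omega) hD
  have hsp : s ≤ p := hsD.trans hDp
  have hD1 : 1 ≤ D := le_trans hs hsD
  have hdpos : (0 : ℝ) < (D : ℝ) := by exact_mod_cast hD1
  have hqpos : (0 : ℝ) < (p : ℝ) := by
    have : 1 ≤ p := hD1.trans hDp
    exact_mod_cast this
  have hBpos : (0 : ℝ) < (p.choose s : ℝ) := by exact_mod_cast Nat.choose_pos hsp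
  have hApos : (0 : ℝ) < ((D + 1).choose (s + 1) : ℝ) := by
    exact_mod_cast Nat.choose_pos (by omega : s + 1 ≤ D + 1)
  have hfs : (0 : ℝ) < (s.factorial : ℝ) := by exact_mod_cast s.factorial_pos
  have hfs1 : (0 : ℝ) < ((s + 1).factorial : ℝ) := by exact_mod_cast (s + 1).factorial_pos
  have hA1 : ((D : ℝ) / 2) ^ (s + 1) ≤ ((s + 1).factorial : ℝ) * ((D + 1).choose (s + 1) : ℝ) := by
    have h1 : (D + 1 + 1 - (s + 1)) ^ (s + 1) ≤ (D + 1).descFactorial (s + 1) :=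
      Nat.pow_sub_le_descFactorial (D + 1) (s + 1)
    rw [Nat.descFactorial_eq_factorial_mul_choose] at h1
    have h2 : ((D + 1 + 1 - (s + 1) : ℕ) : ℝ) = (D : ℝ) + 1 - s := by
      have he : D + 1 + 1 - (s + 1) = D + 1 - s := by omega
      rw [he, Nat.cast_sub (by omega)]
      push_cast; ring
    calc ((D : ℝ) / 2) ^ (s + 1) ≤ ((D : ℝ) + 1 - s) ^ (s + 1) := by
          apply pow_le_pow_left₀ (by positivity)
          have : (s : ℝ) * 2 ≤ (D : ℝ) := by exact_mod_cast (by omega : s * 2 ≤ D)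
          linarith
      _ = ((D + 1 + 1 - (s + 1) : ℕ) : ℝ) ^ (s + 1) := by rw [h2]
      _ ≤ ((s + 1).factorial : ℝ) * ((D + 1).choose (s + 1) : ℝ) := by exact_mod_cast h1
  have hA2 : ((s + 1).factorial : ℝ) * ((D + 1).choose (s + 1) : ℝ) ≤ (2 * (D : ℝ)) ^ (s + 1) := by
    have h1 : (D + 1).descFactorial (s + 1) ≤ (D + 1) ^ (s + 1) :=
      Nat.descFactorial_le_pow (D + 1) (s + 1)
    rw [Nat.descFactorial_eq_factorial_mul_choose] at h1
    calc ((s + 1).factorial : ℝ) * ((D + 1).choose (s + 1) : ℝ) ≤ ((D : ℝ) + 1) ^ (s + 1) := by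
          exact_mod_cast h1
      _ ≤ (2 * (D : ℝ)) ^ (s + 1) := by
          apply pow_le_pow_left₀ (by positivity)
          have : (1 : ℝ) ≤ (D : ℝ) := by exact_mod_cast hD1
          linarith
  have hB1 : ((p : ℝ) / 2) ^ s ≤ (s.factorial : ℝ) * (p.choose s : ℝ) := by
    have h1 : (p + 1 - s) ^ s ≤ p.descFactorial s := Nat.pow_sub_le_descFactorial p s
    rw [Nat.descFactorial_eq_factorial_mul_choose] at h1
    have h2 : ((p + 1 - s : ℕ) : ℝ) = (p : ℝ) + 1 - s := by
      rw [Nat.cast_sub (by omega)]; push_cast; ring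
    calc ((p : ℝ) / 2) ^ s ≤ ((p : ℝ) + 1 - s) ^ s := by
          apply pow_le_pow_left₀ (by positivity)
          have : (s : ℝ) * 2 ≤ (p : ℝ) := by exact_mod_cast (by omega : s * 2 ≤ p)
          linarith
      _ = ((p + 1 - s : ℕ) : ℝ) ^ s := by rw [h2]
      _ ≤ (s.factorial : ℝ) * (p.choose s : ℝ) := by exact_mod_cast h1
  have hB2 : (s.factorial : ℝ) * (p.choose s : ℝ) ≤ (p : ℝ) ^ s := by
    have h1 : p.descFactorial s ≤ p ^ s := Nat.descFactorial_le_pow p s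
    rw [Nat.descFactorial_eq_factorial_mul_choose] at h1
    exact_mod_cast h1
  have hfact : ((s + 1).factorial : ℝ) = ((s : ℝ) + 1) * s.factorial := by
    rw [Nat.factorial_succ]; push_cast; ring
  rw [pHier_eq p D s hsD hDp]
  constructor
  · have low : (((D : ℝ) / 2) ^ (s + 1) / ((s + 1).factorial : ℝ))
        / ((D : ℝ) * ((p : ℝ) ^ s / (s.factorial : ℝ)))
        ≤ ((D + 1).choose (s + 1) : ℝ) / ((D : ℝ) * (p.choose s : ℝ)) := by
      apply div_le_div₀ hApos.le
      · rw [div_le_iff₀ hfs1]; linarith [hA1]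
      · positivity
      · have : (p.choose s : ℝ) ≤ (p : ℝ) ^ s / (s.factorial : ℝ) := by
          rw [le_div_iff₀ hfs]; linarith [hB2]
        exact mul_le_mul_of_nonneg_left this hdpos.le
    calc (1 / (2 ^ (s + 1) * ((s : ℝ) + 1))) * ((D : ℝ) / p) ^ s
        = (((D : ℝ) / 2) ^ (s + 1) / ((s + 1).factorial : ℝ))
            / ((D : ℝ) * ((p : ℝ) ^ s / (s.factorial : ℝ))) := by
          rw [hfact]; simp only [div_pow]; field_simp; ring
      _ ≤ _ := low
  · have up : ((D + 1).choose (s + 1) : ℝ) / ((D : ℝ) * (p.choose s : ℝ))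
        ≤ ((2 * (D : ℝ)) ^ (s + 1) / ((s + 1).factorial : ℝ))
            / ((D : ℝ) * (((p : ℝ) / 2) ^ s / (s.factorial : ℝ))) := by
      apply div_le_div₀ (by positivity)
      · rw [le_div_iff₀ hfs1]; linarith [hA2]
      · positivity
      · have : ((p : ℝ) / 2) ^ s / (s.factorial : ℝ) ≤ (p.choose s : ℝ) := by
          rw [div_le_iff₀ hfs]; linarith [hB1]
        exact mul_le_mul_of_nonneg_left this hdpos.le
    calc ((D + 1).choose (s + 1) : ℝ) / ((D : ℝ) * (p.choose s : ℝ)) ≤ _ := up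
      _ = (2 ^ (2 * s + 1) / ((s : ℝ) + 1)) * ((D : ℝ) / p) ^ s := by
          rw [hfact]; simp only [div_pow]; field_simp; ring

/-- Fix `s ≥ 1`. For sequences `D = D(n)`, `p = p(n)` with `s ≤ D ≤ p`,
`D → ∞` and `D/p → 0`, the containment probability `p_{S̄}` of any fixed size-`s` set
satisfies `p_{S̄} ≍ (D/p)^s`, with constants `0 < c ≤ C` depending only on `s`. -/
theorem stmt_2 (s : ℕ) (hs : 1 ≤ s) :
    ∃ c C : ℝ, 0 < c ∧ c ≤ C ∧
      ∀ (D p : ℕ → ℕ),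
        (∀ n, s ≤ D n) → (∀ n, D n ≤ p n) →
        Tendsto D atTop atTop →
        Tendsto (fun n => (D n : ℝ) / (p n : ℝ)) atTop (nhds 0) →
        ∀ᶠ n in atTop,
          c * ((D n : ℝ) / (p n : ℝ)) ^ s ≤ pHier (p n) (D n) s
          ∧ pHier (p n) (D n) s ≤ C * ((D n : ℝ) / (p n : ℝ)) ^ s := by
  refine ⟨1 / (2 ^ (s + 1) * ((s : ℝ) + 1)), 2 ^ (2 * s + 1) / ((s : ℝ) + 1), by positivity, ?_, ?_⟩
  · rw [div_le_div_iff₀ (by positivity) (by positivity)]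
    have h1 : (1 : ℝ) ≤ 2 ^ (s + 1) := one_le_pow₀ (by norm_num)
    have h2 : (1 : ℝ) ≤ 2 ^ (2 * s + 1) := one_le_pow₀ (by norm_num)
    have hsp : (0 : ℝ) < (s : ℝ) + 1 := by positivity
    calc (1 : ℝ) * ((s : ℝ) + 1) = (s : ℝ) + 1 := by ring
      _ ≤ 2 ^ (s + 1) * ((s : ℝ) + 1) := le_mul_of_one_le_left hsp.le h1
      _ ≤ 2 ^ (2 * s + 1) * (2 ^ (s + 1) * ((s : ℝ) + 1)) :=
          le_mul_of_one_le_left (by positivity) h2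
  · intro D p hsD hDp hDtop _
    filter_upwards [hDtop.eventually_ge_atTop (2 * s)] with n hn
    exact main_bound s (D n) (p n) hs hn (hDp n)


end
end

section
/- Let 1 ≤ D ≤ p, fix a set S̄ ⊆ {1,…,p} with 1 ≤ |S̄| ≤ D and suppose p_{S̄} ≤ 1/2. Let S^(−j) be a random subset with law P(S^(−j) = A) = [D · (1−p_{S̄}) · binom(p,|A|)]^{-1} for every A with 1 ≤ |A| ≤ D and S̄ ⊄ A (the hierarchical uniform distribution conditioned on not containing S̄). Then for any finite set A₀ ⊆ {1,…,p} and any integer t with 0 ≤ t ≤ min(|A₀|, D): P(|S^(−j) ∩ A₀| = t) ≤ 2 · binom(|A₀|, t) · (D/(p−D+1))^t, and consequently P(|S^(−j) ∩ A₀| ≥ t) ≤ Σ_{u=t}^{min(|A₀|,D)} 2 · binom(|A₀|, u) · (D/(p−D+1))^u. -/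
open MeasureTheory Filter

noncomputable section

theorem meas_finset {p : ℕ} (ν : Measure (Finset (Fin p))) (s : Finset (Finset (Fin p))) :
    ν ↑s = ∑ a ∈ s, ν {a} := by
  have h : (↑s : Set (Finset (Fin p))) = ⋃ a ∈ s, {a} := by ext x; simp
  rw [h, measure_biUnion_finset]
  · intro a _ b _ hab
    simp [Function.onFun, Set.disjoint_singleton_left, hab]
  · intro b _; exact MeasurableSpace.measurableSet_top

theorem count_supersets {p : ℕ} (Sbar : Finset (Fin p)) {d : ℕ} (hsd : Sbar.card ≤ d) :
    ((Finset.univ : Finset (Finset (Fin p))).filter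
        (fun A => A.card = d ∧ Sbar ⊆ A)).card
      = (p - Sbar.card).choose (d - Sbar.card) := by
  have hc : (Sbarᶜ : Finset (Fin p)).card = p - Sbar.card := by
    simp [Finset.card_compl]
  rw [← hc, ← Finset.card_powersetCard (d - Sbar.card) Sbarᶜ]
  apply Finset.card_bij' (fun A _ => A \ Sbar) (fun B _ => B ∪ Sbar)
  · intro A hA
    simp only [Finset.mem_filter, Finset.mem_univ, true_and] at hA
    rw [Finset.mem_powersetCard]
    constructor
    · intro x hx; simp only [Finset.mem_sdiff] at hx; simp [Finset.mem_compl, hx.2]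
    · rw [Finset.card_sdiff_of_subset hA.2, hA.1]
  · intro B hB
    rw [Finset.mem_powersetCard] at hB
    have hdisj : Disjoint B Sbar := by
      rw [Finset.disjoint_left]; intro x hx
      have := hB.1 hx; simpa [Finset.mem_compl] using this
    simp only [Finset.mem_filter, Finset.mem_univ, true_and]
    constructor
    · rw [Finset.card_union_of_disjoint hdisj, hB.2]
      omega
    · exact Finset.subset_union_right
  · intro A hA
    simp only [Finset.mem_filter, Finset.mem_univ, true_and] at hA
    exact Finset.sdiff_union_of_subset hA.2
  · intro B hB
    rw [Finset.mem_powersetCard] at hB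
    have hdisj : Disjoint B Sbar := by
      rw [Finset.disjoint_left]; intro x hx
      have := hB.1 hx; simpa [Finset.mem_compl] using this
    exact Finset.union_sdiff_cancel_right hdisj

theorem count_all {p : ℕ} (d : ℕ) :
    ((Finset.univ : Finset (Finset (Fin p))).filter (fun A => A.card = d)).card
      = p.choose d := by
  have h : (Finset.univ : Finset (Finset (Fin p))).filter (fun A => A.card = d)
      = Finset.powersetCard d Finset.univ := by
    ext A; simp [Finset.mem_powersetCard]
  rw [h, Finset.card_powersetCard, Finset.card_univ, Fintype.card_fin]

theorem count_inter_le {p : ℕ} (A₀ : Finset (Fin p)) (d t : ℕ) :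
    ((Finset.univ : Finset (Finset (Fin p))).filter
        (fun A => A.card = d ∧ (A ∩ A₀).card = t)).card
      ≤ A₀.card.choose t * (p - A₀.card).choose (d - t) := by
  have := Finset.card_le_card_of_injOn
    (f := fun A => (A ∩ A₀, A \ A₀))
    (s := (Finset.univ : Finset (Finset (Fin p))).filter
        (fun A => A.card = d ∧ (A ∩ A₀).card = t))
    (t := Finset.powersetCard t A₀ ×ˢ Finset.powersetCard (d - t) A₀ᶜ)
    ?_ ?_
  · rwa [Finset.card_product, Finset.card_powersetCard, Finset.card_powersetCard,
      Finset.card_compl, Fintype.card_fin] at this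
  · intro A hA
    simp only [Finset.mem_coe, Finset.mem_filter, Finset.mem_univ, true_and] at hA ⊢
    rw [Finset.mem_product, Finset.mem_powersetCard, Finset.mem_powersetCard]
    refine ⟨⟨Finset.inter_subset_right, hA.2⟩, ?_, ?_⟩
    · intro x hx; simp only [Finset.mem_sdiff] at hx; simp [Finset.mem_compl, hx.2]
    · obtain ⟨h1, h2⟩ := hA
      have h := Finset.card_inter_add_card_sdiff A A₀
      show (A \ A₀).card = d - t
      omega
  · intro A hA B hB hAB
    simp only [Prod.mk.injEq] at hAB
    have : A ∩ A₀ ∪ A \ A₀ = B ∩ A₀ ∪ B \ A₀ := by rw [hAB.1, hAB.2]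
    have e : ∀ X : Finset (Fin p), X ∩ A₀ ∪ X \ A₀ = X := fun X => sup_inf_sdiff X A₀
    rwa [e, e] at this

theorem choose_descFactorial : ∀ (t p d : ℕ), t ≤ d → d ≤ p →
    (p - t).choose (d - t) * p.descFactorial t = p.choose d * d.descFactorial t := by
  intro t
  induction t with
  | zero => intro p d _ _; simp
  | succ t ih =>
    intro p d htd hdp
    obtain ⟨d', rfl⟩ : ∃ d', d = d' + 1 := ⟨d - 1, by omega⟩
    obtain ⟨p', rfl⟩ : ∃ p', p = p' + 1 := ⟨p - 1, by omega⟩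
    have h1 := ih p' d' (by omega) (by omega)
    have h2 : (p' + 1) * p'.choose d' = (p' + 1).choose (d' + 1) * (d' + 1) :=
      Nat.add_one_mul_choose_eq p' d'
    have e1 : p' + 1 - (t + 1) = p' - t := by omega
    have e2 : d' + 1 - (t + 1) = d' - t := by omega
    rw [e1, e2, Nat.succ_descFactorial_succ, Nat.succ_descFactorial_succ]
    calc (p' - t).choose (d' - t) * ((p' + 1) * p'.descFactorial t)
        = (p' + 1) * ((p' - t).choose (d' - t) * p'.descFactorial t) := by ring
      _ = (p' + 1) * (p'.choose d' * d'.descFactorial t) := by rw [h1]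
      _ = ((p' + 1) * p'.choose d') * d'.descFactorial t := by ring
      _ = ((p' + 1).choose (d' + 1) * (d' + 1)) * d'.descFactorial t := by rw [h2]
      _ = (p' + 1).choose (d' + 1) * ((d' + 1) * d'.descFactorial t) := by ring

theorem key_nat {t d D p : ℕ} (htd : t ≤ d) (hdD : d ≤ D) (hDp : D ≤ p) :
    (p - t).choose (d - t) * (p - D + 1) ^ t ≤ p.choose d * D ^ t := by
  calc (p - t).choose (d - t) * (p - D + 1) ^ t
      ≤ (p - t).choose (d - t) * (p + 1 - t) ^ t :=
        Nat.mul_le_mul_left _ (Nat.pow_le_pow_left (by omega) t)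
    _ ≤ (p - t).choose (d - t) * p.descFactorial t :=
        Nat.mul_le_mul_left _ (Nat.pow_sub_le_descFactorial p t)
    _ = p.choose d * d.descFactorial t := choose_descFactorial t p d htd (le_trans hdD hDp)
    _ ≤ p.choose d * d ^ t := Nat.mul_le_mul_left _ (Nat.descFactorial_le_pow d t)
    _ ≤ p.choose d * D ^ t := Nat.mul_le_mul_left _ (Nat.pow_le_pow_left hdD t)

set_option maxHeartbeats 1000000 in
/-- Let `1 ≤ D ≤ p`, fix `S̄` with `1 ≤ |S̄| ≤ D` and suppose `p_{S̄} ≤ 1/2`.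
If `S^(−j)` has the hierarchical uniform law conditioned on not containing `S̄`, i.e.
`P(S^(−j) = A) = [D(1−p_{S̄})·C(p,|A|)]⁻¹` for `1 ≤ |A| ≤ D`, `S̄ ⊄ A`, then for any finite
`A₀` and `0 ≤ t ≤ min(|A₀|, D)`:
`P(|S^(−j) ∩ A₀| = t) ≤ 2·C(|A₀|,t)·(D/(p−D+1))^t`, and consequently
`P(|S^(−j) ∩ A₀| ≥ t) ≤ Σ_{u=t}^{min(|A₀|,D)} 2·C(|A₀|,u)·(D/(p−D+1))^u`. -/
theorem stmt_3 (p D : ℕ) (hD : 1 ≤ D) (hDp : D ≤ p)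
    (Sbar : Finset (Fin p)) (hSbar1 : 1 ≤ Sbar.card) (hSbarD : Sbar.card ≤ D)
    (pj : ℝ)
    (hpj : pj = (1 / (D : ℝ)) *
      ∑ d ∈ Finset.Icc Sbar.card D,
        ((p - Sbar.card).choose (d - Sbar.card) : ℝ) / (p.choose d))
    (hpjhalf : pj ≤ 1 / 2)
    (ν : Measure (Finset (Fin p))) [IsProbabilityMeasure ν]
    (hlaw : ∀ A : Finset (Fin p), 1 ≤ A.card → A.card ≤ D → ¬ Sbar ⊆ A →
      ν {A} = ENNReal.ofReal (1 / (D * (1 - pj) * (p.choose A.card))))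
    (hlaw' : ∀ A : Finset (Fin p), Sbar ⊆ A → ν {A} = 0)
    (A₀ : Finset (Fin p)) (t : ℕ) (ht : t ≤ min A₀.card D) :
    ν {A | (A ∩ A₀).card = t}
        ≤ ENNReal.ofReal (2 * (A₀.card.choose t : ℝ) * ((D : ℝ) / ((p : ℝ) - D + 1)) ^ t)
    ∧ ν {A | t ≤ (A ∩ A₀).card}
        ≤ ENNReal.ofReal (∑ u ∈ Finset.Icc t (min A₀.card D),
            2 * (A₀.card.choose u : ℝ) * ((D : ℝ) / ((p : ℝ) - D + 1)) ^ u) := by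
  -- basic positivity facts
  have hpj1 : (0:ℝ) < 1 - pj := by linarith
  have hD0 : (0:ℝ) < (D:ℝ) := by exact_mod_cast hD
  have hp0 : (0:ℝ) < (p:ℝ) - (D:ℝ) + 1 := by
    have : (D:ℝ) ≤ (p:ℝ) := by exact_mod_cast hDp
    linarith
  have hchoose : ∀ d : ℕ, d ≤ D → (0:ℝ) < (p.choose d : ℝ) := by
    intro d hd
    exact_mod_cast Nat.choose_pos (le_trans hd hDp)
  have hcastpD : ((p - D + 1 : ℕ) : ℝ) = (p:ℝ) - (D:ℝ) + 1 := by
    push_cast [Nat.cast_sub hDp]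
    ring
  set c : ℕ → ℝ := fun d => 1 / ((D:ℝ) * (1 - pj) * (p.choose d)) with hc
  have hcpos : ∀ d : ℕ, d ≤ D → 0 < c d := by
    intro d hd
    have := hchoose d hd
    simp only [hc]
    positivity
  -- the support set
  set G : Finset (Finset (Fin p)) :=
    Finset.univ.filter (fun A => 1 ≤ A.card ∧ A.card ≤ D ∧ ¬ Sbar ⊆ A) with hG
  have hGmem : ∀ A ∈ G, 1 ≤ A.card ∧ A.card ≤ D ∧ ¬ Sbar ⊆ A := by
    intro A hA
    simpa only [hG, Finset.mem_filter, Finset.mem_univ, true_and] using hA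
  have hDne : (D:ℝ) ≠ 0 := ne_of_gt hD0
  have hpjne : (1:ℝ) - pj ≠ 0 := ne_of_gt hpj1
  have hIcc : (Finset.Icc 1 D).card = D := by rw [Nat.card_Icc]; omega
  -- fiber counts
  have hGfiber : ∀ d ∈ Finset.Icc 1 D,
      (G.filter (fun A => A.card = d)).card
        + (Finset.univ.filter (fun A : Finset (Fin p) => A.card = d ∧ Sbar ⊆ A)).card
        = p.choose d := by
    intro d hd
    rw [Finset.mem_Icc] at hd
    have h1 : G.filter (fun A => A.card = d)
        = (Finset.univ.filter (fun A : Finset (Fin p) => A.card = d)).filter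
            (fun A => ¬ Sbar ⊆ A) := by
      ext A
      simp only [hG, Finset.mem_filter, Finset.mem_univ, true_and]
      constructor
      · rintro ⟨⟨_, _, h⟩, hcard⟩; exact ⟨hcard, h⟩
      · rintro ⟨hcard, h⟩; exact ⟨⟨by omega, by omega, h⟩, hcard⟩
    have h2 : Finset.univ.filter (fun A : Finset (Fin p) => A.card = d ∧ Sbar ⊆ A)
        = (Finset.univ.filter (fun A : Finset (Fin p) => A.card = d)).filter
            (fun A => Sbar ⊆ A) := by
      rw [Finset.filter_filter]
    rw [h1, h2, add_comm, Finset.card_filter_add_card_filter_not, count_all]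
  have hsup0 : ∀ d : ℕ, d < Sbar.card →
      (Finset.univ.filter (fun A : Finset (Fin p) => A.card = d ∧ Sbar ⊆ A)).card = 0 := by
    intro d hd
    rw [Finset.card_eq_zero, Finset.filter_eq_empty_iff]
    rintro A - ⟨hcard, hsub⟩
    have := Finset.card_le_card hsub
    omega
  -- total mass of G is 1
  have hsum1 : ∑ A ∈ G, c A.card = 1 := by
    rw [← Finset.sum_fiberwise_of_maps_to (g := fun A : Finset (Fin p) => A.card)
        (t := Finset.Icc 1 D) (fun A hA => by
          obtain ⟨h1, h2, _⟩ := hGmem A hA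
          rw [Finset.mem_Icc]; exact ⟨h1, h2⟩)]
    have hinner : ∀ d ∈ Finset.Icc 1 D,
        ∑ A ∈ G.filter (fun A => A.card = d), c A.card
          = ((G.filter (fun A => A.card = d)).card : ℝ) * c d := by
      intro d _
      have h1 : ∑ A ∈ G.filter (fun A => A.card = d), c A.card
          = ∑ A ∈ G.filter (fun A => A.card = d), c d :=
        Finset.sum_congr rfl (fun A hA => by rw [(Finset.mem_filter.mp hA).2])
      rw [h1, Finset.sum_const, nsmul_eq_mul]
    rw [Finset.sum_congr rfl hinner]
    have hterm : ∀ d ∈ Finset.Icc 1 D,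
        ((G.filter (fun A => A.card = d)).card : ℝ) * c d
          = 1 / ((D:ℝ) * (1 - pj))
            - ((Finset.univ.filter
                (fun A : Finset (Fin p) => A.card = d ∧ Sbar ⊆ A)).card : ℝ)
              / ((D:ℝ) * (1 - pj) * (p.choose d)) := by
      intro d hd
      have hcard := hGfiber d hd
      have hcd : ((G.filter (fun A => A.card = d)).card : ℝ)
          = (p.choose d : ℝ) - ((Finset.univ.filter
              (fun A : Finset (Fin p) => A.card = d ∧ Sbar ⊆ A)).card : ℝ) := by
        have := congrArg (Nat.cast (R := ℝ)) hcard
        push_cast at this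
        linarith
      rw [Finset.mem_Icc] at hd
      have hch := hchoose d hd.2
      have hchne : (p.choose d : ℝ) ≠ 0 := ne_of_gt hch
      rw [hcd]
      simp only [hc]
      field_simp
    rw [Finset.sum_congr rfl hterm, Finset.sum_sub_distrib, Finset.sum_const, hIcc,
      nsmul_eq_mul]
    have hszero : ∑ d ∈ Finset.Icc 1 D,
        ((Finset.univ.filter
            (fun A : Finset (Fin p) => A.card = d ∧ Sbar ⊆ A)).card : ℝ)
          / ((D:ℝ) * (1 - pj) * (p.choose d))
        = ∑ d ∈ Finset.Icc Sbar.card D,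
            ((p - Sbar.card).choose (d - Sbar.card) : ℝ)
              / ((D:ℝ) * (1 - pj) * (p.choose d)) := by
      rw [← Finset.sum_subset (Finset.Icc_subset_Icc_left hSbar1)]
      · apply Finset.sum_congr rfl
        intro d hd
        rw [Finset.mem_Icc] at hd
        rw [count_supersets Sbar hd.1]
      · intro d hd1 hd2
        rw [Finset.mem_Icc] at hd1
        rw [Finset.mem_Icc] at hd2
        rw [hsup0 d (by omega)]
        simp
    rw [hszero]
    have hpjsum : ∑ d ∈ Finset.Icc Sbar.card D,
        ((p - Sbar.card).choose (d - Sbar.card) : ℝ) / (p.choose d) = (D:ℝ) * pj := by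
      rw [hpj]; field_simp
    have hfact : ∑ d ∈ Finset.Icc Sbar.card D,
        ((p - Sbar.card).choose (d - Sbar.card) : ℝ)
          / ((D:ℝ) * (1 - pj) * (p.choose d))
        = (1 / ((D:ℝ) * (1 - pj))) * ∑ d ∈ Finset.Icc Sbar.card D,
            ((p - Sbar.card).choose (d - Sbar.card) : ℝ) / (p.choose d) := by
      rw [Finset.mul_sum]
      apply Finset.sum_congr rfl
      intro d hd
      rw [Finset.mem_Icc] at hd
      have hch := hchoose d hd.2
      have hchne : (p.choose d : ℝ) ≠ 0 := ne_of_gt hch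
      field_simp
    rw [hfact, hpjsum]
    field_simp
  have hmes : ∀ s : Set (Finset (Fin p)), MeasurableSet s :=
    fun s => MeasurableSpace.measurableSet_top
  have hνsingle : ∀ A ∈ G, ν {A} = ENNReal.ofReal (c A.card) := by
    intro A hA
    obtain ⟨h1, h2, h3⟩ := hGmem A hA
    exact hlaw A h1 h2 h3
  have hνG : ν ↑G = 1 := by
    rw [meas_finset, Finset.sum_congr rfl hνsingle,
      ← ENNReal.ofReal_sum_of_nonneg (fun A hA =>
        le_of_lt (hcpos A.card (hGmem A hA).2.1)),
      hsum1, ENNReal.ofReal_one]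
  have hνGc : ν (↑G : Set (Finset (Fin p)))ᶜ = 0 := by
    rw [measure_compl (hmes _) (measure_ne_top ν _), hνG, measure_univ, tsub_self]
  have hrestrict : ∀ E : Set (Finset (Fin p)), ν E ≤ ν (E ∩ ↑G) := by
    intro E
    calc ν E ≤ ν ((E ∩ ↑G) ∪ (↑G : Set (Finset (Fin p)))ᶜ) := by
          apply measure_mono
          intro x hx
          by_cases hxG : x ∈ (↑G : Set (Finset (Fin p)))
          · exact Or.inl ⟨hx, hxG⟩
          · exact Or.inr hxG
      _ ≤ ν (E ∩ ↑G) + ν (↑G : Set (Finset (Fin p)))ᶜ := measure_union_le _ _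
      _ = ν (E ∩ ↑G) := by rw [hνGc, add_zero]
  -- the key pointwise bound
  have key : ∀ u : ℕ, u ≤ A₀.card → u ≤ D →
      ν {A | (A ∩ A₀).card = u}
        ≤ ENNReal.ofReal (2 * (A₀.card.choose u : ℝ) * ((D:ℝ) / ((p:ℝ) - D + 1)) ^ u) := by
    intro u hua huD
    set F : Finset (Finset (Fin p)) := G.filter (fun A => (A ∩ A₀).card = u) with hF
    have hFsub : ∀ A ∈ F, A ∈ G := fun A hA => Finset.mem_of_mem_filter A hA
    have hEG : {A : Finset (Fin p) | (A ∩ A₀).card = u} ∩ ↑G = ↑F := by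
      ext A
      simp only [hF, Set.mem_inter_iff, Set.mem_setOf_eq, Finset.coe_filter,
        Finset.mem_coe, Finset.mem_filter]
      tauto
    refine le_trans (hrestrict _) ?_
    rw [hEG, meas_finset]
    rw [Finset.sum_congr rfl (fun A hA => hνsingle A (hFsub A hA)),
      ← ENNReal.ofReal_sum_of_nonneg (fun A hA =>
        le_of_lt (hcpos A.card (hGmem A (hFsub A hA)).2.1))]
    apply ENNReal.ofReal_le_ofReal
    -- real-valued estimate
    set cap : ℝ := (A₀.card.choose u : ℝ) * ((D:ℝ) / ((p:ℝ) - D + 1)) ^ u with hcap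
    have hcap0 : 0 ≤ cap := by positivity
    rw [← Finset.sum_fiberwise_of_maps_to (g := fun A : Finset (Fin p) => A.card)
        (t := Finset.Icc 1 D) (fun A hA => by
          obtain ⟨h1, h2, _⟩ := hGmem A (hFsub A hA)
          rw [Finset.mem_Icc]; exact ⟨h1, h2⟩)]
    have hinner : ∀ d ∈ Finset.Icc 1 D,
        ∑ A ∈ F.filter (fun A => A.card = d), c A.card
          ≤ cap / ((D:ℝ) * (1 - pj)) := by
      intro d hd
      rw [Finset.mem_Icc] at hd
      have h1 : ∑ A ∈ F.filter (fun A => A.card = d), c A.card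
          = ((F.filter (fun A => A.card = d)).card : ℝ) * c d := by
        have h0 : ∑ A ∈ F.filter (fun A => A.card = d), c A.card
            = ∑ A ∈ F.filter (fun A => A.card = d), c d :=
          Finset.sum_congr rfl (fun A hA => by rw [(Finset.mem_filter.mp hA).2])
        rw [h0, Finset.sum_const, nsmul_eq_mul]
      rw [h1]
      by_cases hdu : u ≤ d
      · -- count bound
        have hch := hchoose d hd.2
        have hchne : (p.choose d : ℝ) ≠ 0 := ne_of_gt hch
        have hQ : (0:ℝ) < ((p:ℝ) - D + 1) ^ u := pow_pos hp0 u
        have hcount : (F.filter (fun A => A.card = d)).card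
            ≤ A₀.card.choose u * (p - A₀.card).choose (d - u) := by
          refine le_trans (Finset.card_le_card ?_) (count_inter_le A₀ d u)
          intro A hA
          rw [Finset.mem_filter] at hA
          have h2 := (Finset.mem_filter.mp hA.1).2
          simp only [Finset.mem_filter, Finset.mem_univ, true_and]
          exact ⟨hA.2, h2⟩
        have hmono : (p - A₀.card).choose (d - u) ≤ (p - u).choose (d - u) :=
          Nat.choose_le_choose _ (by omega)
        have hkey := key_nat hdu hd.2 hDp (t := u)
        have hnat : (F.filter (fun A => A.card = d)).card * (p - D + 1) ^ u
            ≤ A₀.card.choose u * (p.choose d * D ^ u) :=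
          calc (F.filter (fun A => A.card = d)).card * (p - D + 1) ^ u
              ≤ (A₀.card.choose u * (p - u).choose (d - u)) * (p - D + 1) ^ u := by
                apply Nat.mul_le_mul_right
                exact le_trans hcount (Nat.mul_le_mul_left _ hmono)
            _ = A₀.card.choose u * ((p - u).choose (d - u) * (p - D + 1) ^ u) := by ring
            _ ≤ A₀.card.choose u * (p.choose d * D ^ u) :=
                Nat.mul_le_mul_left _ hkey
        have hreal : ((F.filter (fun A => A.card = d)).card : ℝ) * ((p:ℝ) - D + 1) ^ u
            ≤ (A₀.card.choose u : ℝ) * ((p.choose d : ℝ) * (D:ℝ) ^ u) := by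
          have h3 := (Nat.cast_le (α := ℝ)).2 hnat
          push_cast [hcastpD] at h3
          exact h3
        have hcc : ((F.filter (fun A => A.card = d)).card : ℝ)
            ≤ cap * (p.choose d : ℝ) := by
          have h4 : ((F.filter (fun A => A.card = d)).card : ℝ)
              ≤ (A₀.card.choose u : ℝ) * ((p.choose d : ℝ) * (D:ℝ) ^ u)
                / ((p:ℝ) - D + 1) ^ u := by
            rw [le_div_iff₀ hQ]
            exact hreal
          have h5 : (A₀.card.choose u : ℝ) * ((p.choose d : ℝ) * (D:ℝ) ^ u)
                / ((p:ℝ) - D + 1) ^ u = cap * (p.choose d : ℝ) := by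
            rw [hcap, div_pow]
            ring
          rw [← h5]
          exact h4
        have hZ : (0:ℝ) < (D:ℝ) * (1 - pj) * (p.choose d : ℝ) := by positivity
        calc ((F.filter (fun A => A.card = d)).card : ℝ) * c d
            = ((F.filter (fun A => A.card = d)).card : ℝ)
                / ((D:ℝ) * (1 - pj) * (p.choose d)) := by
              simp only [hc]; ring
          _ ≤ (cap * (p.choose d : ℝ)) / ((D:ℝ) * (1 - pj) * (p.choose d)) :=
              (div_le_div_iff_of_pos_right hZ).mpr hcc
          _ = cap / ((D:ℝ) * (1 - pj)) := by
              rw [eq_div_iff (by positivity : ((D:ℝ) * (1 - pj)) ≠ 0)]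
              field_simp
      · -- d < u : fiber empty
        have hempty : F.filter (fun A => A.card = d) = ∅ := by
          rw [Finset.filter_eq_empty_iff]
          intro A hA
          rw [Finset.mem_filter] at hA
          intro hcard
          have h1 : (A ∩ A₀).card ≤ A.card := Finset.card_le_card Finset.inter_subset_left
          omega
        rw [hempty]
        simp only [Finset.card_empty, Nat.cast_zero, zero_mul]
        positivity
    calc ∑ d ∈ Finset.Icc 1 D, ∑ A ∈ F.filter (fun A => A.card = d), c A.card
        ≤ ∑ d ∈ Finset.Icc 1 D, cap / ((D:ℝ) * (1 - pj)) := Finset.sum_le_sum hinner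
      _ = (D:ℝ) * (cap / ((D:ℝ) * (1 - pj))) := by
          rw [Finset.sum_const, hIcc, nsmul_eq_mul]
      _ = cap / (1 - pj) := by
          field_simp
      _ ≤ 2 * cap := by
          rw [div_le_iff₀ hpj1]
          have h8 : 0 ≤ cap * (1 - 2 * pj) := mul_nonneg hcap0 (by linarith)
          linarith
      _ = 2 * (A₀.card.choose u : ℝ) * ((D:ℝ) / ((p:ℝ) - D + 1)) ^ u := by
          rw [hcap]; ring
  constructor
  · exact key t (le_trans ht (min_le_left _ _)) (le_trans ht (min_le_right _ _))
  · -- tail bound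
    have hsubset : {A : Finset (Fin p) | t ≤ (A ∩ A₀).card} ∩ ↑G
        ⊆ ⋃ u ∈ Finset.Icc t (min A₀.card D), {A : Finset (Fin p) | (A ∩ A₀).card = u} := by
      rintro A ⟨hAt, hAG⟩
      obtain ⟨h1, h2, _⟩ := hGmem A hAG
      have h3 : (A ∩ A₀).card ≤ A₀.card := Finset.card_le_card Finset.inter_subset_right
      have h4 : (A ∩ A₀).card ≤ A.card := Finset.card_le_card Finset.inter_subset_left
      simp only [Set.mem_iUnion, Set.mem_setOf_eq]
      refine ⟨(A ∩ A₀).card, ?_, rfl⟩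
      rw [Finset.mem_Icc]
      exact ⟨hAt, by omega⟩
    calc ν {A : Finset (Fin p) | t ≤ (A ∩ A₀).card}
        ≤ ν ({A : Finset (Fin p) | t ≤ (A ∩ A₀).card} ∩ ↑G) := hrestrict _
      _ ≤ ν (⋃ u ∈ Finset.Icc t (min A₀.card D),
            {A : Finset (Fin p) | (A ∩ A₀).card = u}) := measure_mono hsubset
      _ ≤ ∑ u ∈ Finset.Icc t (min A₀.card D),
            ν {A : Finset (Fin p) | (A ∩ A₀).card = u} := measure_biUnion_finset_le _ _
      _ ≤ ∑ u ∈ Finset.Icc t (min A₀.card D),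
            ENNReal.ofReal (2 * (A₀.card.choose u : ℝ) * ((D:ℝ) / ((p:ℝ) - D + 1)) ^ u) := by
          apply Finset.sum_le_sum
          intro u hu
          rw [Finset.mem_Icc] at hu
          exact key u (le_trans hu.2 (min_le_left _ _)) (le_trans hu.2 (min_le_right _ _))
      _ = ENNReal.ofReal (∑ u ∈ Finset.Icc t (min A₀.card D),
            2 * (A₀.card.choose u : ℝ) * ((D:ℝ) / ((p:ℝ) - D + 1)) ^ u) := by
          rw [ENNReal.ofReal_sum_of_nonneg]
          intro u _
          positivity

end
end

section
/- Let k, m ≥ 1 be integers, let X₁,…,X_k be i.i.d. real-valued random variables with common law μ and Y₁,…,Y_m be i.i.d. real-valued random variables with common law ν, with the two families independent of each other, and let t ≥ 0. Define δ(y) = P(X₁ + t ≥ y) for y ∈ ℝ. Then P( min_{1≤i≤k} X_i + t < min_{1≤l≤m} Y_l ) ≥ (1 − E_ν[δ(Y₁)^k])^m. -/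
open MeasureTheory ProbabilityTheory Set
open scoped ENNReal

noncomputable section

lemma joint_law_aux {Ω : Type*} [MeasurableSpace Ω] (P : Measure Ω) [IsProbabilityMeasure P]
    {ι : Type*} [Fintype ι] (f : ι → Ω → ℝ) (hfm : ∀ i, Measurable (f i))
    (κ : ι → Measure ℝ) [∀ i, IsProbabilityMeasure (κ i)]
    (hlaw : ∀ i, Measure.map (f i) P = κ i)
    (hindep : iIndepFun f P) :
    Measure.map (fun ω i => f i ω) P = Measure.pi κ := by
  have hZ : Measurable (fun ω i => f i ω) := measurable_pi_lambda _ hfm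
  refine (Measure.pi_eq fun s hs => ?_).symm
  rw [Measure.map_apply hZ (MeasurableSet.univ_pi hs)]
  have h1 : (fun ω i => f i ω) ⁻¹' (Set.pi Set.univ s) = ⋂ i ∈ Finset.univ, (f i) ⁻¹' (s i) := by
    ext ω; simp [Set.mem_pi]
  rw [h1, hindep.measure_inter_preimage_eq_mul Finset.univ (fun i _ => hs i)]
  exact Finset.prod_congr rfl fun i _ => by
    rw [← hlaw i, Measure.map_apply (hfm i) (hs i)]

lemma pi_integral_pow_aux {m : ℕ} (ν : Measure ℝ) [IsProbabilityMeasure ν] (g : ℝ → ℝ) :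
    ∫ q : Fin m → ℝ, ∏ l, g (q l) ∂(Measure.pi fun _ => ν) = (∫ y, g y ∂ν) ^ m := by
  letI : MeasureSpace ℝ := ⟨ν⟩
  have : SigmaFinite (volume : Measure ℝ) := by
    show SigmaFinite ν; infer_instance
  have h := integral_fintype_prod_eq_pow (𝕜 := ℝ) (ι := Fin m) g (μ := ν)
  simpa using h

lemma inner_meas_aux {k : ℕ} (hk : 1 ≤ k) (μ : Measure ℝ) [IsProbabilityMeasure μ] (c t : ℝ) :
    (Measure.pi fun _ : Fin k => μ) {x | (⨅ i, x i) + t < c}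
      = 1 - (μ (Ici (c - t))) ^ k := by
  have hne : Nonempty (Fin k) := ⟨⟨0, hk⟩⟩
  have h1 : {x : Fin k → ℝ | (⨅ i, x i) + t < c} = (Set.pi Set.univ fun _ => Ici (c - t))ᶜ := by
    ext x
    simp only [mem_setOf_eq, mem_compl_iff, Set.mem_pi, mem_univ, forall_true_left, mem_Ici]
    rw [← not_le]
    constructor
    · intro h h'
      exact h (by
        have : c - t ≤ ⨅ i, x i := le_ciInf h'
        linarith)
    · intro h h2
      apply h
      intro i
      have : (⨅ j, x j) ≤ x i := ciInf_le (Set.Finite.bddBelow (Set.finite_range x)) i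
      linarith
  rw [h1, measure_compl (MeasurableSet.univ_pi fun _ => measurableSet_Ici) (measure_ne_top _ _),
    Measure.pi_pi]
  simp [Finset.prod_const]

/-- Let `X₁,…,X_k` be i.i.d. with law `μ`, `Y₁,…,Y_m` i.i.d. with law `ν`,
the two families independent, and `t ≥ 0`. With `δ(y) = P(X₁ + t ≥ y)`,
`P(min_i X_i + t < min_l Y_l) ≥ (1 − E_ν[δ(Y₁)^k])^m`. -/
theorem stmt_4 {Ω : Type*} [MeasurableSpace Ω] (P : Measure Ω) [IsProbabilityMeasure P]
    (k m : ℕ) (hk : 1 ≤ k) (hm : 1 ≤ m)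
    (X : Fin k → Ω → ℝ) (Y : Fin m → Ω → ℝ)
    (hXmeas : ∀ i, Measurable (X i)) (hYmeas : ∀ l, Measurable (Y l))
    (μ ν : Measure ℝ) [IsProbabilityMeasure μ] [IsProbabilityMeasure ν]
    (hX : ∀ i, Measure.map (X i) P = μ) (hY : ∀ l, Measure.map (Y l) P = ν)
    (hindep : iIndepFun (Sum.elim X Y) P)
    (t : ℝ) (ht : 0 ≤ t)
    (δ : ℝ → ℝ) (hδ : ∀ y, δ y = (μ {x | y ≤ x + t}).toReal) :
    (1 - ∫ y, (δ y) ^ k ∂ν) ^ m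
      ≤ (P {ω | (⨅ i, X i ω) + t < ⨅ l, Y l ω}).toReal := by
  have hnek : Nonempty (Fin k) := ⟨⟨0, hk⟩⟩
  have hnem : Nonempty (Fin m) := ⟨⟨0, hm⟩⟩
  -- the ENNReal-valued tail function
  set D : ℝ → ℝ≥0∞ := fun y => μ (Ici (y - t)) with hD
  have hδD : ∀ y, δ y = (D y).toReal := by
    intro y
    rw [hδ]
    congr 1
    congr 1
    ext x
    simp [sub_le_iff_le_add]
  have hD1 : ∀ y, D y ≤ 1 := fun y => prob_le_one
  have hDanti : Antitone D := fun a b hab =>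
    measure_mono (Ici_subset_Ici.2 (by linarith))
  have hDmeas : Measurable D := hDanti.measurable
  have hδmeas : Measurable δ := by
    have : δ = fun y => (D y).toReal := funext hδD
    rw [this]; exact ENNReal.measurable_toReal.comp hDmeas
  have hδ0 : ∀ y, 0 ≤ δ y := fun y => by rw [hδD]; exact ENNReal.toReal_nonneg
  have hδ1 : ∀ y, δ y ≤ 1 := fun y => by
    rw [hδD]
    exact ENNReal.toReal_le_of_le_ofReal one_pos.le (by simpa using hD1 y)
  have hg0 : ∀ y, 0 ≤ 1 - δ y ^ k := fun y => by
    have h1 : δ y ^ k ≤ 1 := pow_le_one₀ (hδ0 y) (hδ1 y); linarith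
  have hg1 : ∀ y, 1 - δ y ^ k ≤ 1 := fun y => by
    have := pow_nonneg (hδ0 y) k; linarith
  -- measures
  set κ : (Fin k ⊕ Fin m) → Measure ℝ := Sum.elim (fun _ => μ) (fun _ => ν) with hκ
  haveI hκP : ∀ i, IsProbabilityMeasure (κ i) := by
    rintro (i | l)
    · exact (inferInstance : IsProbabilityMeasure μ)
    · exact (inferInstance : IsProbabilityMeasure ν)
  set μk : Measure (Fin k → ℝ) := Measure.pi (fun _ => μ) with hμk
  set νm : Measure (Fin m → ℝ) := Measure.pi (fun _ => ν) with hνm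
  -- joint law
  have hlaw : ∀ i, Measure.map (Sum.elim X Y i) P = κ i := by
    rintro (i | l)
    · exact hX i
    · exact hY l
  have hfm : ∀ i, Measurable (Sum.elim X Y i) := by
    rintro (i | l)
    · exact hXmeas i
    · exact hYmeas l
  have hjoint : Measure.map (fun ω i => Sum.elim X Y i ω) P = Measure.pi κ :=
    joint_law_aux P _ hfm κ hlaw hindep
  -- the event
  set S : Set ((Fin k ⊕ Fin m) → ℝ) :=
    {f | (⨅ i, f (Sum.inl i)) + t < ⨅ l, f (Sum.inr l)} with hSdef
  have hSmeas : MeasurableSet S :=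
    measurableSet_lt
      ((Measurable.iInf fun i => measurable_pi_apply (Sum.inl i)).add_const t)
      (Measurable.iInf fun l => measurable_pi_apply (Sum.inr l))
  have hPE : P {ω | (⨅ i, X i ω) + t < ⨅ l, Y l ω} = Measure.pi κ S := by
    have h0 : {ω | (⨅ i, X i ω) + t < ⨅ l, Y l ω}
        = (fun ω i => Sum.elim X Y i ω) ⁻¹' S := rfl
    rw [h0, ← hjoint,
      Measure.map_apply (measurable_pi_lambda _ hfm) hSmeas]
  -- split off the product
  set S' : Set ((Fin k → ℝ) × (Fin m → ℝ)) :=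
    {p | (⨅ i, p.1 i) + t < ⨅ l, p.2 l} with hS'def
  have hS'meas : MeasurableSet S' :=
    measurableSet_lt
      ((Measurable.iInf fun i => (measurable_pi_apply i).comp measurable_fst).add_const t)
      (Measurable.iInf fun l => (measurable_pi_apply l).comp measurable_snd)
  have hpres := measurePreserving_sumPiEquivProdPi_symm κ
  have hsplit : Measure.pi κ S = (μk.prod νm) S' := by
    have h1 := hpres.measure_preimage hSmeas.nullMeasurableSet
    have h2 : (Measure.pi fun i => κ (Sum.inl i)) = μk := by
      rw [hμk]; rfl
    have h3 : (Measure.pi fun i => κ (Sum.inr i)) = νm := by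
      rw [hνm]; rfl
    have h4 : (MeasurableEquiv.sumPiEquivProdPi (fun _ : Fin k ⊕ Fin m => ℝ)).symm ⁻¹' S
        = S' := rfl
    rw [h2, h3, h4] at h1
    exact h1.symm
  -- Fubini
  have hfub : (μk.prod νm) S' = ∫⁻ q, (1 - (D (⨅ l, q l)) ^ k) ∂νm := by
    rw [Measure.prod_apply_symm hS'meas]
    refine lintegral_congr fun q => ?_
    have h5 : (fun x => (x, q)) ⁻¹' S' = {x : Fin k → ℝ | (⨅ i, x i) + t < ⨅ l, q l} := rfl
    rw [h5, inner_meas_aux hk μ _ t]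
  -- iInf measurability
  have hGm : Measurable (fun q : Fin m → ℝ => ⨅ l, q l) :=
    Measurable.iInf fun l => measurable_pi_apply l
  -- convert to a real integral
  have htoReal : ((μk.prod νm) S').toReal = ∫ q, (1 - δ (⨅ l, q l) ^ k) ∂νm := by
    rw [hfub]
    have hmeasf : AEMeasurable (fun q : Fin m → ℝ => 1 - (D (⨅ l, q l)) ^ k) νm :=
      (Measurable.sub measurable_const ((hDmeas.comp hGm).pow_const k)).aemeasurable
    have hlt : ∀ᵐ q ∂νm, (1 - (D (⨅ l, q l)) ^ k) < ⊤ :=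
      Filter.Eventually.of_forall fun q =>
        lt_of_le_of_lt tsub_le_self ENNReal.one_lt_top
    rw [← integral_toReal hmeasf hlt]
    refine integral_congr_ae (Filter.Eventually.of_forall fun q => ?_)
    show (1 - D (⨅ l, q l) ^ k).toReal = 1 - δ (⨅ l, q l) ^ k
    rw [ENNReal.toReal_sub_of_le (pow_le_one' (hD1 _) k) ENNReal.one_ne_top,
      ENNReal.toReal_pow, ENNReal.toReal_one, ← hδD]
  -- integrability facts
  have hintδk : Integrable (fun y => δ y ^ k) ν := by
    refine (integrable_const (1 : ℝ)).mono'
      ((hδmeas.pow_const k).aestronglyMeasurable)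
      (Filter.Eventually.of_forall fun y => ?_)
    rw [Real.norm_eq_abs, abs_of_nonneg (pow_nonneg (hδ0 y) k)]
    exact pow_le_one₀ (hδ0 y) (hδ1 y)
  have hintprod : Integrable (fun q : Fin m → ℝ => ∏ l, (1 - δ (q l) ^ k)) νm := by
    refine (integrable_const (1 : ℝ)).mono'
      (Finset.aestronglyMeasurable_fun_prod _ fun l _ =>
        ((measurable_const.sub ((hδmeas.comp (measurable_pi_apply l)).pow_const k)).aestronglyMeasurable))
      (Filter.Eventually.of_forall fun q => ?_)
    rw [Real.norm_eq_abs, abs_of_nonneg (Finset.prod_nonneg fun l _ => hg0 _)]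
    exact Finset.prod_le_one (fun l _ => hg0 _) (fun l _ => hg1 _)
  have hintmin : Integrable (fun q : Fin m → ℝ => 1 - δ (⨅ l, q l) ^ k) νm := by
    refine (integrable_const (1 : ℝ)).mono'
      ((measurable_const.sub ((hδmeas.comp hGm).pow_const k)).aestronglyMeasurable)
      (Filter.Eventually.of_forall fun q => ?_)
    rw [Real.norm_eq_abs, abs_of_nonneg (hg0 _)]
    exact hg1 _
  -- pointwise comparison
  have hpt : ∀ q : Fin m → ℝ, (∏ l, (1 - δ (q l) ^ k)) ≤ 1 - δ (⨅ l, q l) ^ k := by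
    intro q
    obtain ⟨l₀, hl₀⟩ := Finite.exists_min q
    have hmin : (⨅ l, q l) = q l₀ :=
      le_antisymm (ciInf_le (Set.Finite.bddBelow (Set.finite_range q)) l₀) (le_ciInf hl₀)
    rw [hmin, ← Finset.mul_prod_erase Finset.univ _ (Finset.mem_univ l₀)]
    exact mul_le_of_le_one_right (hg0 _)
      (Finset.prod_le_one (fun l _ => hg0 _) (fun l _ => hg1 _))
  -- final chain
  calc (1 - ∫ y, (δ y) ^ k ∂ν) ^ m
      = (∫ y, (1 - δ y ^ k) ∂ν) ^ m := by
        rw [integral_sub (integrable_const 1) hintδk, integral_const]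
        simp
    _ = ∫ q, ∏ l, (1 - δ (q l) ^ k) ∂νm := (pi_integral_pow_aux ν _).symm
    _ ≤ ∫ q, (1 - δ (⨅ l, q l) ^ k) ∂νm := integral_mono hintprod hintmin hpt
    _ = ((μk.prod νm) S').toReal := htoReal.symm
    _ = (P {ω | (⨅ i, X i ω) + t < ⨅ l, Y l ω}).toReal := by rw [hPE, hsplit]

end
end

section
/- Let w₁,…,w_p > 0 be weights with total W = Σ_i w_i and minimum m = min_i w_i, and let 1 ≤ d ≤ p. Sample d distinct indices from {1,…,p} sequentially without replacement, where at each step the next index is chosen among the remaining ones with probability proportional to its weight. Then for every j ∈ {1,…,p}: P( j is among the d sampled indices ) ≥ d·m/W. More precisely, P( j is not sampled ) ≤ Π_{i=0}^{d−1} (1 − m/(W − i·m)) = (W − d·m)/W. -/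
noncomputable section

open Finset

/-- Probability of drawing the ordered tuple `σ` in sequential weighted sampling without
replacement with weights `w` (total weight `W = Σᵢ wᵢ`): at each step the next index is
chosen among the remaining ones with probability proportional to its weight. -/
def seqSampleProb {p : ℕ} (w : Fin p → ℝ) {d : ℕ} (σ : Fin d → Fin p) : ℝ :=
  ∏ t : Fin d, w (σ t) / ((∑ i, w i) - ∑ s ∈ Finset.univ.filter fun s => s < t, w (σ s))

namespace SeqSample13

/-- Generalized sampling weight with explicit remaining total `c`. -/
def F {p : ℕ} (w : Fin p → ℝ) (c : ℝ) {d : ℕ} (σ : Fin d → Fin p) : ℝ :=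
  ∏ t : Fin d, w (σ t) / (c - ∑ s ∈ Finset.univ.filter fun s => s < t, w (σ s))

lemma cons_partial {p d : ℕ} (w : Fin p → ℝ) (i : Fin p) (τ : Fin d → Fin p) (t : Fin d) :
    ∑ s ∈ Finset.univ.filter (fun s => s < t.succ), w ((Fin.cons i τ : Fin (d + 1) → Fin p) s)
      = w i + ∑ s ∈ Finset.univ.filter (fun s => s < t), w (τ s) := by
  rw [Finset.sum_filter, Finset.sum_filter, Fin.sum_univ_succ]
  simp [Fin.succ_lt_succ_iff, Fin.succ_pos]

lemma F_cons {p d : ℕ} (w : Fin p → ℝ) (c : ℝ) (i : Fin p) (τ : Fin d → Fin p) :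
    F w c (Fin.cons i τ) = w i / c * F w (c - w i) τ := by
  unfold F
  rw [Fin.prod_univ_succ]
  congr 1
  · simp [Fin.not_lt_zero]
  · refine Finset.prod_congr rfl fun t _ => ?_
    rw [Fin.cons_succ, cons_partial, sub_add_eq_sub_sub]

lemma sum_pi_succ {p d : ℕ} (f : (Fin (d + 1) → Fin p) → ℝ) :
    ∑ σ : Fin (d + 1) → Fin p, f σ
      = ∑ i : Fin p, ∑ τ : Fin d → Fin p, f (Fin.cons i τ) := by
  rw [← (Fin.consEquiv (fun _ : Fin (d + 1) => Fin p)).sum_comp f, Fintype.sum_prod_type]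
  rfl

lemma card_mul_le {p : ℕ} (w : Fin p → ℝ) (m : ℝ) (hwm : ∀ i, m ≤ w i)
    (A : Finset (Fin p)) : (A.card : ℝ) * m ≤ ∑ i ∈ A, w i := by
  calc (A.card : ℝ) * m = ∑ _i ∈ A, m := by rw [Finset.sum_const, nsmul_eq_mul]
  _ ≤ _ := Finset.sum_le_sum fun i _ => hwm i

lemma sum_d0 {p : ℕ} (g : (Fin 0 → Fin p) → ℝ) (σ₀ : Fin 0 → Fin p) :
    ∑ σ : Fin 0 → Fin p, g σ = g σ₀ := by
  rw [Fintype.sum_eq_single σ₀]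
  intro x hx
  exact absurd (Subsingleton.elim x σ₀) hx

lemma total {p : ℕ} (w : Fin p → ℝ) (hw : ∀ i, 0 < w i) :
    ∀ (d : ℕ) (A : Finset (Fin p)), d ≤ A.card →
      (∑ σ : Fin d → Fin p,
        if Function.Injective σ ∧ ∀ t, σ t ∈ A then F w (∑ i ∈ A, w i) σ else 0) = 1
  | 0, A, _ => by
      rw [sum_d0 _ (fun t => t.elim0)]
      rw [if_pos ⟨fun a => a.elim0, fun t => t.elim0⟩]
      simp [F]
  | (d + 1), A, hcard => by
      have hA : A.Nonempty := Finset.card_pos.mp (by omega)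
      have hWA : 0 < ∑ i ∈ A, w i := Finset.sum_pos (fun i _ => hw i) hA
      rw [sum_pi_succ]
      have key : ∀ i : Fin p,
          (∑ τ : Fin d → Fin p,
            if Function.Injective (Fin.cons i τ : Fin (d + 1) → Fin p) ∧
                ∀ t, (Fin.cons i τ : Fin (d + 1) → Fin p) t ∈ A
            then F w (∑ i ∈ A, w i) (Fin.cons i τ) else 0)
          = if i ∈ A then w i / (∑ i ∈ A, w i) else 0 := by
        intro i
        by_cases hi : i ∈ A
        · rw [if_pos hi]
          have herase : ∑ k ∈ A.erase i, w k = (∑ i ∈ A, w i) - w i := by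
            have := Finset.sum_erase_add A w hi
            linarith
          have hc : d ≤ (A.erase i).card := by
            rw [Finset.card_erase_of_mem hi]; omega
          have hIH := total w hw d (A.erase i) hc
          rw [herase] at hIH
          have hcond : ∀ τ : Fin d → Fin p,
              (Function.Injective (Fin.cons i τ : Fin (d + 1) → Fin p) ∧
                ∀ t, (Fin.cons i τ : Fin (d + 1) → Fin p) t ∈ A)
              ↔ (Function.Injective τ ∧ ∀ t, τ t ∈ A.erase i) := by
            intro τ
            rw [Fin.cons_injective_iff, Fin.forall_fin_succ]
            simp only [Fin.cons_zero, Fin.cons_succ, Finset.mem_erase, Set.mem_range,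
              not_exists]
            constructor
            · rintro ⟨⟨hnr, hinj⟩, _, hall⟩
              exact ⟨hinj, fun t => ⟨fun h => hnr t h, hall t⟩⟩
            · rintro ⟨hinj, hall⟩
              exact ⟨⟨fun t h => (hall t).1 h, hinj⟩, hi, fun t => (hall t).2⟩
          calc (∑ τ : Fin d → Fin p,
                if Function.Injective (Fin.cons i τ : Fin (d + 1) → Fin p) ∧
                    ∀ t, (Fin.cons i τ : Fin (d + 1) → Fin p) t ∈ A
                then F w (∑ i ∈ A, w i) (Fin.cons i τ) else 0)
              = ∑ τ : Fin d → Fin p,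
                w i / (∑ i ∈ A, w i) *
                  (if Function.Injective τ ∧ ∀ t, τ t ∈ A.erase i
                   then F w ((∑ i ∈ A, w i) - w i) τ else 0) := by
                refine Finset.sum_congr rfl fun τ _ => ?_
                rw [if_congr (hcond τ) (F_cons w _ i τ) rfl, mul_ite, mul_zero]
            _ = w i / (∑ i ∈ A, w i) := by rw [← Finset.mul_sum, hIH, mul_one]
        · rw [if_neg hi]
          refine Finset.sum_eq_zero fun τ _ => ?_
          rw [if_neg]
          rintro ⟨-, hall⟩
          exact hi (by simpa using hall 0)
      rw [Finset.sum_congr rfl fun i _ => key i, Finset.sum_ite_mem, Finset.univ_inter,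
        ← Finset.sum_div]
      exact div_self hWA.ne'

lemma factor_nonneg {m x : ℝ} (hm : 0 < m) (hx : m ≤ x) : 0 ≤ 1 - m / x := by
  have hx0 : 0 < x := lt_of_lt_of_le hm hx
  have : m / x ≤ 1 := (div_le_one hx0).mpr hx
  linarith

lemma factor_mono {m x y : ℝ} (hm : 0 < m) (hx : m ≤ x) (hxy : x ≤ y) :
    1 - m / x ≤ 1 - m / y := by
  have hx0 : 0 < x := lt_of_lt_of_le hm hx
  have h : m / y ≤ m / x := div_le_div_of_nonneg_left hm.le hx0 hxy
  linarith

lemma avoid {p : ℕ} (w : Fin p → ℝ) (m : ℝ) (hm : 0 < m) (hwm : ∀ i, m ≤ w i) (j : Fin p) :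
    ∀ (d : ℕ) (A : Finset (Fin p)), d ≤ A.card → j ∈ A →
      (∑ σ : Fin d → Fin p,
        if Function.Injective σ ∧ (∀ t, σ t ∈ A) ∧ (∀ t, σ t ≠ j)
        then F w (∑ i ∈ A, w i) σ else 0)
      ≤ ∏ k ∈ Finset.range d, (1 - m / ((∑ i ∈ A, w i) - k * m))
  | 0, A, _, _ => by
      rw [sum_d0 _ (fun t => t.elim0)]
      rw [if_pos ⟨fun a => a.elim0, fun t => t.elim0, fun t => t.elim0⟩]
      simp [F]
  | (d + 1), A, hcard, hj => by
      have hw : ∀ i, 0 < w i := fun i => lt_of_lt_of_le hm (hwm i)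
      have hA : A.Nonempty := Finset.card_pos.mp (by omega)
      have hWA : 0 < ∑ i ∈ A, w i := Finset.sum_pos (fun i _ => hw i) hA
      set WA := ∑ i ∈ A, w i with hWAdef
      have hWAcard : ((d : ℝ) + 1) * m ≤ WA := by
        have h1 := card_mul_le w m hwm A
        have h2 : ((d : ℝ) + 1) ≤ (A.card : ℝ) := by exact_mod_cast hcard
        nlinarith
      -- the target product, split off the first factor
      set Q := ∏ k ∈ Finset.range d, (1 - m / (WA - ((k : ℝ) + 1) * m)) with hQdef
      have hQ_nonneg : 0 ≤ Q := by
        refine Finset.prod_nonneg fun k hk => ?_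
        have hkd : (k : ℝ) + 1 ≤ d := by
          have := Finset.mem_range.mp hk; exact_mod_cast this
        refine factor_nonneg hm ?_
        nlinarith
      have hsplit : ∏ k ∈ Finset.range (d + 1), (1 - m / (WA - k * m))
          = Q * (1 - m / WA) := by
        rw [Finset.prod_range_succ' (fun k => 1 - m / (WA - (k : ℝ) * m)) d]
        push_cast
        simp [hQdef]
      rw [hsplit, sum_pi_succ]
      have key : ∀ i : Fin p,
          (∑ τ : Fin d → Fin p,
            if Function.Injective (Fin.cons i τ : Fin (d + 1) → Fin p) ∧
                (∀ t, (Fin.cons i τ : Fin (d + 1) → Fin p) t ∈ A) ∧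
                (∀ t, (Fin.cons i τ : Fin (d + 1) → Fin p) t ≠ j)
            then F w WA (Fin.cons i τ) else 0)
          ≤ if i ∈ A.erase j then w i / WA * Q else 0 := by
        intro i
        by_cases hi : i ∈ A.erase j
        · rw [if_pos hi]
          obtain ⟨hij, hiA⟩ := Finset.mem_erase.mp hi
          have herase : ∑ k ∈ A.erase i, w k = WA - w i := by
            have := Finset.sum_erase_add A w hiA
            rw [hWAdef]; linarith
          have hc : d ≤ (A.erase i).card := by
            rw [Finset.card_erase_of_mem hiA]; omega
          have hje : j ∈ A.erase i := Finset.mem_erase.mpr ⟨fun h => hij h.symm, hj⟩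
          have hIH := avoid w m hm hwm j d (A.erase i) hc hje
          rw [herase] at hIH
          have hPQ : ∏ k ∈ Finset.range d, (1 - m / ((WA - w i) - k * m)) ≤ Q := by
            rw [hQdef]
            refine Finset.prod_le_prod (fun k hk => ?_) (fun k hk => ?_)
            · have hkd : (k : ℝ) + 1 ≤ d := by
                have := Finset.mem_range.mp hk; exact_mod_cast this
              have hwi := hwm i
              refine factor_nonneg hm ?_
              have hce : (d : ℝ) * m ≤ WA - w i := by
                have := card_mul_le w m hwm (A.erase i)
                rw [herase] at this
                have hcc : (d : ℝ) ≤ ((A.erase i).card : ℝ) := by exact_mod_cast hc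
                nlinarith
              nlinarith
            · have hkd : (k : ℝ) + 1 ≤ d := by
                have := Finset.mem_range.mp hk; exact_mod_cast this
              have hce : (d : ℝ) * m ≤ WA - w i := by
                have := card_mul_le w m hwm (A.erase i)
                rw [herase] at this
                have hcc : (d : ℝ) ≤ ((A.erase i).card : ℝ) := by exact_mod_cast hc
                nlinarith
              refine factor_mono hm (by nlinarith) ?_
              have := hwm i
              linarith
          have hcond : ∀ τ : Fin d → Fin p,
              (Function.Injective (Fin.cons i τ : Fin (d + 1) → Fin p) ∧
                (∀ t, (Fin.cons i τ : Fin (d + 1) → Fin p) t ∈ A) ∧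
                (∀ t, (Fin.cons i τ : Fin (d + 1) → Fin p) t ≠ j))
              ↔ (Function.Injective τ ∧ (∀ t, τ t ∈ A.erase i) ∧ (∀ t, τ t ≠ j)) := by
            intro τ
            rw [Fin.cons_injective_iff,
              Fin.forall_fin_succ (P := fun t => (Fin.cons i τ : Fin (d + 1) → Fin p) t ∈ A),
              Fin.forall_fin_succ (P := fun t => (Fin.cons i τ : Fin (d + 1) → Fin p) t ≠ j)]
            simp only [Fin.cons_zero, Fin.cons_succ, Finset.mem_erase, Set.mem_range,
              not_exists]
            constructor
            · rintro ⟨⟨hnr, hinj⟩, ⟨_, hall⟩, _, hnj⟩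
              exact ⟨hinj, fun t => ⟨fun h => hnr t h, hall t⟩, hnj⟩
            · rintro ⟨hinj, hall, hnj⟩
              exact ⟨⟨fun t h => (hall t).1 h, hinj⟩, ⟨hiA, fun t => (hall t).2⟩, hij, hnj⟩
          calc (∑ τ : Fin d → Fin p,
                if Function.Injective (Fin.cons i τ : Fin (d + 1) → Fin p) ∧
                    (∀ t, (Fin.cons i τ : Fin (d + 1) → Fin p) t ∈ A) ∧
                    (∀ t, (Fin.cons i τ : Fin (d + 1) → Fin p) t ≠ j)
                then F w WA (Fin.cons i τ) else 0)
              = w i / WA * (∑ τ : Fin d → Fin p,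
                  if Function.Injective τ ∧ (∀ t, τ t ∈ A.erase i) ∧ (∀ t, τ t ≠ j)
                  then F w (WA - w i) τ else 0) := by
                rw [Finset.mul_sum]
                refine Finset.sum_congr rfl fun τ _ => ?_
                rw [if_congr (hcond τ) (F_cons w _ i τ) rfl, mul_ite, mul_zero]
            _ ≤ w i / WA * Q := by
                have hnn : 0 ≤ w i / WA := div_nonneg (hw i).le hWA.le
                exact mul_le_mul_of_nonneg_left (le_trans hIH hPQ) hnn
        · rw [if_neg hi]
          refine le_of_eq (Finset.sum_eq_zero fun τ _ => ?_)
          rw [if_neg]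
          rintro ⟨-, hall, hnj⟩
          by_cases hiA : i ∈ A
          · have hij : i = j := by
              by_contra hne
              exact hi (Finset.mem_erase.mpr ⟨hne, hiA⟩)
            exact hnj 0 (by simp [hij])
          · exact hiA (by simpa using hall 0)
      calc (∑ i : Fin p, ∑ τ : Fin d → Fin p,
            if Function.Injective (Fin.cons i τ : Fin (d + 1) → Fin p) ∧
                (∀ t, (Fin.cons i τ : Fin (d + 1) → Fin p) t ∈ A) ∧
                (∀ t, (Fin.cons i τ : Fin (d + 1) → Fin p) t ≠ j)
            then F w WA (Fin.cons i τ) else 0)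
          ≤ ∑ i : Fin p, if i ∈ A.erase j then w i / WA * Q else 0 :=
            Finset.sum_le_sum fun i _ => key i
        _ = (∑ i ∈ A.erase j, w i) / WA * Q := by
            rw [Finset.sum_ite_mem, Finset.univ_inter, ← Finset.sum_mul, ← Finset.sum_div]
        _ ≤ (1 - m / WA) * Q := by
            have herj : ∑ i ∈ A.erase j, w i = WA - w j := by
              have := Finset.sum_erase_add A w hj
              rw [hWAdef]; linarith
            have h1 : (∑ i ∈ A.erase j, w i) / WA ≤ 1 - m / WA := by
              rw [herj, sub_div, div_self hWA.ne']
              have hwj := hwm j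
              have : m / WA ≤ w j / WA := by gcongr
              linarith
            exact mul_le_mul_of_nonneg_right h1 hQ_nonneg
        _ = Q * (1 - m / WA) := mul_comm _ _

lemma telescope (m W : ℝ) :
    ∀ d : ℕ, (∀ k : ℕ, k < d → W - k * m ≠ 0) → W ≠ 0 →
      ∏ k ∈ Finset.range d, (1 - m / (W - k * m)) = (W - d * m) / W
  | 0, _, hW => by simp [div_self hW]
  | (n + 1), h, hW => by
      rw [Finset.prod_range_succ, telescope m W n (fun k hk => h k (by omega)) hW]
      have h1 : W - n * m ≠ 0 := h n (by omega)
      push_cast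
      field_simp
      ring

end SeqSample13

/-- Sequential weighted sampling without replacement of `d` indices from
`{1,…,p}` with weights `w > 0`, total `W` and minimum `m`.  For every `j`,
`P(j is sampled) ≥ d·m/W`; more precisely
`P(j is not sampled) ≤ ∏_{i=0}^{d−1} (1 − m/(W − i·m)) = (W − d·m)/W`. -/
theorem stmt_13 (p d : ℕ) (hd : 1 ≤ d) (hdp : d ≤ p)
    (w : Fin p → ℝ) (hw : ∀ i, 0 < w i)
    (W : ℝ) (hW : W = ∑ i, w i)
    (m : ℝ) (hm : m = ⨅ i, w i)
    (j : Fin p) :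
    (d : ℝ) * m / W ≤
      ∑ σ ∈ (Finset.univ : Finset (Fin d → Fin p)).filter
          fun σ => Function.Injective σ ∧ ∃ t, σ t = j,
        seqSampleProb w σ
    ∧ (∑ σ ∈ (Finset.univ : Finset (Fin d → Fin p)).filter
          fun σ => Function.Injective σ ∧ ∀ t, σ t ≠ j,
        seqSampleProb w σ)
        ≤ ∏ i ∈ Finset.range d, (1 - m / (W - i * m))
    ∧ ∏ i ∈ Finset.range d, (1 - m / (W - i * m)) = (W - d * m) / W := by
  have hp : 0 < p := lt_of_lt_of_le hd hdp
  have hne : Nonempty (Fin p) := ⟨⟨0, hp⟩⟩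
  obtain ⟨i₀, hi₀⟩ := Finite.exists_min w
  have hmpos : 0 < m := by
    rw [hm]; exact lt_of_lt_of_le (hw i₀) (le_ciInf hi₀)
  have hmw : ∀ i, m ≤ w i := fun i => by
    rw [hm]; exact ciInf_le (Set.Finite.bddBelow (Set.finite_range w)) i
  have hWpos : 0 < W := by
    rw [hW]; exact Finset.sum_pos (fun i _ => hw i) Finset.univ_nonempty
  have hWlb : (p : ℝ) * m ≤ W := by
    have := SeqSample13.card_mul_le w m hmw Finset.univ
    rw [hW]; simpa using this
  have hcard : d ≤ (Finset.univ : Finset (Fin p)).card := by simpa using hdp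
  have h3 : ∏ i ∈ Finset.range d, (1 - m / (W - i * m)) = (W - d * m) / W := by
    refine SeqSample13.telescope m W d (fun k hk => ?_) hWpos.ne'
    have hkp : (k : ℝ) + 1 ≤ p := by exact_mod_cast lt_of_lt_of_le hk hdp
    nlinarith
  have h2 : (∑ σ ∈ (Finset.univ : Finset (Fin d → Fin p)).filter
          fun σ => Function.Injective σ ∧ ∀ t, σ t ≠ j, seqSampleProb w σ)
      ≤ ∏ i ∈ Finset.range d, (1 - m / (W - i * m)) := by
    have hav := SeqSample13.avoid w m hmpos hmw j d Finset.univ hcard (Finset.mem_univ j)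
    rw [Finset.sum_filter, hW]
    calc (∑ σ : Fin d → Fin p,
          if Function.Injective σ ∧ ∀ t, σ t ≠ j then seqSampleProb w σ else 0)
        = ∑ σ : Fin d → Fin p,
            if Function.Injective σ ∧ (∀ t, σ t ∈ (Finset.univ : Finset (Fin p))) ∧
                (∀ t, σ t ≠ j)
            then SeqSample13.F w (∑ i, w i) σ else 0 :=
          Finset.sum_congr rfl fun σ _ => if_congr (by simp) rfl rfl
      _ ≤ _ := hav
  have htotal : ∑ σ ∈ (Finset.univ : Finset (Fin d → Fin p)).filter
        (fun σ => Function.Injective σ), seqSampleProb w σ = 1 := by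
    rw [Finset.sum_filter, ← SeqSample13.total w hw d Finset.univ hcard]
    exact Finset.sum_congr rfl fun σ _ => if_congr (by simp) rfl rfl
  have e1 : (Finset.univ : Finset (Fin d → Fin p)).filter
        (fun σ => Function.Injective σ ∧ ∃ t, σ t = j)
      = ((Finset.univ : Finset (Fin d → Fin p)).filter fun σ => Function.Injective σ).filter
          (fun σ => ∃ t, σ t = j) := by
    rw [Finset.filter_filter]
  have e2 : (Finset.univ : Finset (Fin d → Fin p)).filter
        (fun σ => Function.Injective σ ∧ ∀ t, σ t ≠ j)
      = ((Finset.univ : Finset (Fin d → Fin p)).filter fun σ => Function.Injective σ).filter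
          (fun σ => ¬∃ t, σ t = j) := by
    rw [Finset.filter_filter]
    apply Finset.filter_congr
    intro σ _
    simp [not_exists]
  have hsplit : (∑ σ ∈ (Finset.univ : Finset (Fin d → Fin p)).filter
          (fun σ => Function.Injective σ ∧ ∃ t, σ t = j), seqSampleProb w σ)
      + (∑ σ ∈ (Finset.univ : Finset (Fin d → Fin p)).filter
          (fun σ => Function.Injective σ ∧ ∀ t, σ t ≠ j), seqSampleProb w σ) = 1 := by
    rw [e1, e2, Finset.sum_filter_add_sum_filter_not, htotal]
  have hx : (W - (d : ℝ) * m) / W = 1 - (d : ℝ) * m / W := by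
    field_simp
  refine ⟨?_, h2, h3⟩
  have h2' := h2
  rw [h3, hx] at h2'
  linarith

end
end

section
/- Let 1 ≤ D ≤ p, C₀ > 0, and let η̃ = (η̃₁,…,η̃_p) be a probability vector with η̃_j ≥ (C₀/p)/(D + C₀) for every j. Let S follow the hierarchical restrictive multinomial distribution R(U₀, p, η̃). Then for every j and every d ∈ {1,…,D}: P(j ∈ S | |S| = d) ≥ C₀·d/((D+C₀)·p), and consequently P(j ∈ S) ≥ (D+1)·C₀/(2(D+C₀)·p). -/
noncomputable section

open Finset

open Classical in
/-- Point mass of the hierarchical restrictive multinomial distribution `R(U₀, p, w)`: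
first a size `d` is drawn uniformly from `{1,…,D}`, then a subset of size `d` is drawn by
sequential weighted sampling without replacement with weights `w`. -/
def rmnMass (p D : ℕ) (w : Fin p → ℝ) (A : Finset (Fin p)) : ℝ :=
  if 1 ≤ A.card ∧ A.card ≤ D then
    (1 / (D : ℝ)) *
      ∑ σ ∈ (Finset.univ : Finset (Fin A.card → Fin p)).filter
          fun σ => Function.Injective σ ∧ Finset.image σ Finset.univ = A,
        seqSampleProb w σ
  else 0

namespace Stmt14Aux
open scoped Classical

/-- Generalized sequential sampling probability with explicit total weight `c`. -/
def seqProb {p : ℕ} (c : ℝ) (w : Fin p → ℝ) {d : ℕ} (σ : Fin d → Fin p) : ℝ :=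
  ∏ t : Fin d, w (σ t) / (c - ∑ s ∈ Finset.univ.filter fun s => s < t, w (σ s))

lemma seqSampleProb_eq {p : ℕ} (w : Fin p → ℝ) {d : ℕ} (σ : Fin d → Fin p) :
    seqSampleProb w σ = seqProb (∑ i, w i) w σ := rfl

lemma seqProb_zero {p : ℕ} (c : ℝ) (w : Fin p → ℝ) (σ : Fin 0 → Fin p) :
    seqProb c w σ = 1 := by
  simp [seqProb]

lemma seqProb_cons {p : ℕ} (c : ℝ) (w : Fin p → ℝ) {d : ℕ} (i : Fin p) (τ : Fin d → Fin p) :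
    seqProb c w (Fin.cons i τ) = (w i / c) * seqProb (c - w i) w τ := by
  unfold seqProb
  rw [Fin.prod_univ_succ]
  congr 1
  · simp
  · refine Finset.prod_congr rfl fun t _ => ?_
    rw [Fin.cons_succ]
    congr 1
    have h : ∑ s ∈ Finset.univ.filter (fun s => s < Fin.succ t),
          w ((Fin.cons i τ : Fin (d+1) → Fin p) s)
        = w i + ∑ s ∈ Finset.univ.filter (fun s => s < t), w (τ s) := by
      rw [Finset.sum_filter, Finset.sum_filter, Fin.sum_univ_succ]
      simp [Fin.succ_lt_succ_iff, Fin.succ_pos]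
    rw [h]; ring

lemma sum_pi_succ {p d : ℕ} (f : (Fin (d+1) → Fin p) → ℝ) :
    ∑ σ : Fin (d+1) → Fin p, f σ = ∑ i : Fin p, ∑ τ : Fin d → Fin p, f (Fin.cons i τ) := by
  rw [← (Fintype.sum_equiv (Fin.consEquiv fun _ => Fin p) _ f (fun x => rfl)),
    Fintype.sum_prod_type]
  rfl

lemma cond_cons {p d : ℕ} (T : Finset (Fin p)) (i : Fin p) (τ : Fin d → Fin p) :
    (Function.Injective (Fin.cons i τ : Fin (d+1) → Fin p) ∧
        ∀ t, (Fin.cons i τ : Fin (d+1) → Fin p) t ∈ T)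
      ↔ i ∈ T ∧ Function.Injective τ ∧ ∀ t, τ t ∈ T.erase i := by
  rw [Fin.cons_injective_iff, Fin.forall_fin_succ]
  simp only [Fin.cons_zero, Fin.cons_succ, Finset.mem_erase, Set.mem_range, not_exists]
  constructor
  · rintro ⟨⟨hr, hinj⟩, hi, ht⟩
    exact ⟨hi, hinj, fun t => ⟨fun h => hr t h, ht t⟩⟩
  · rintro ⟨hi, hinj, ht⟩
    exact ⟨⟨fun t h => (ht t).1 h, hinj⟩, hi, fun t => (ht t).2⟩

lemma cond_cons' {p d : ℕ} (T : Finset (Fin p)) (j i : Fin p) (τ : Fin d → Fin p) :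
    (Function.Injective (Fin.cons i τ : Fin (d+1) → Fin p) ∧
        (∀ t, (Fin.cons i τ : Fin (d+1) → Fin p) t ∈ T) ∧
        (∀ t, (Fin.cons i τ : Fin (d+1) → Fin p) t ≠ j))
      ↔ i ∈ T.erase j ∧
          (Function.Injective τ ∧ (∀ t, τ t ∈ T.erase i) ∧ ∀ t, τ t ≠ j) := by
  have h := cond_cons T i τ
  rw [Fin.forall_fin_succ (P := fun t => (Fin.cons i τ : Fin (d+1) → Fin p) t ≠ j)]
  simp only [Fin.cons_zero, Fin.cons_succ]
  constructor
  · rintro ⟨hinj, hmem, hij, hjt⟩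
    obtain ⟨hi, hinj', hmem'⟩ := h.1 ⟨hinj, hmem⟩
    exact ⟨Finset.mem_erase.mpr ⟨hij, hi⟩, hinj', hmem', hjt⟩
  · rintro ⟨hi, hinj', hmem', hjt⟩
    obtain ⟨hij, hiT⟩ := Finset.mem_erase.mp hi
    obtain ⟨hinj, hmem⟩ := h.2 ⟨hiT, hinj', hmem'⟩
    exact ⟨hinj, hmem, hij, hjt⟩

lemma card_b_le {p : ℕ} {b : ℝ} (w : Fin p → ℝ) (hw : ∀ i, b ≤ w i) (T : Finset (Fin p)) :
    (T.card : ℝ) * b ≤ ∑ i ∈ T, w i := by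
  calc (T.card : ℝ) * b = ∑ _i ∈ T, b := by rw [Finset.sum_const, nsmul_eq_mul]
  _ ≤ ∑ i ∈ T, w i := Finset.sum_le_sum fun i _ => hw i

lemma total_sum {p : ℕ} (w : Fin p → ℝ) (b : ℝ) (hb : 0 < b) (hw : ∀ i, b ≤ w i) :
    ∀ (d : ℕ) (T : Finset (Fin p)), d ≤ T.card →
      ∑ σ : Fin d → Fin p,
        (if Function.Injective σ ∧ ∀ t, σ t ∈ T then seqProb (∑ i ∈ T, w i) w σ else 0) = 1 := by
  intro d
  induction d with
  | zero =>
    intro T _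
    have h1 : ∀ σ : Fin 0 → Fin p,
        (if Function.Injective σ ∧ ∀ t, σ t ∈ T then seqProb (∑ i ∈ T, w i) w σ else 0) = 1 := by
      intro σ
      rw [if_pos ⟨Function.injective_of_subsingleton σ, fun t => Fin.elim0 t⟩, seqProb_zero]
    rw [Finset.sum_congr rfl fun σ _ => h1 σ, Finset.sum_const, nsmul_eq_mul, mul_one]
    simp
  | succ d ih =>
    intro T hT
    have hc : 0 < ∑ i ∈ T, w i := by
      have := card_b_le w hw T
      have h2 : (1 : ℝ) ≤ (T.card : ℝ) := by exact_mod_cast Nat.one_le_iff_ne_zero.mpr (by omega)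
      nlinarith
    set c := ∑ i ∈ T, w i with hcdef
    rw [sum_pi_succ]
    have key : ∀ i : Fin p,
        (∑ τ : Fin d → Fin p,
          (if Function.Injective (Fin.cons i τ : Fin (d+1) → Fin p) ∧
              ∀ t, (Fin.cons i τ : Fin (d+1) → Fin p) t ∈ T
            then seqProb c w (Fin.cons i τ : Fin (d+1) → Fin p) else 0))
          = if i ∈ T then w i / c else 0 := by
      intro i
      by_cases hi : i ∈ T
      · rw [if_pos hi]
        have herase : c - w i = ∑ k ∈ T.erase i, w k := by
          rw [Finset.sum_erase_eq_sub hi]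
        have hcard : d ≤ (T.erase i).card := by
          rw [Finset.card_erase_of_mem hi]; omega
        calc ∑ τ : Fin d → Fin p,
              (if Function.Injective (Fin.cons i τ : Fin (d+1) → Fin p) ∧
                  ∀ t, (Fin.cons i τ : Fin (d+1) → Fin p) t ∈ T
                then seqProb c w (Fin.cons i τ : Fin (d+1) → Fin p) else 0)
            = ∑ τ : Fin d → Fin p,
              (w i / c) * (if Function.Injective τ ∧ ∀ t, τ t ∈ T.erase i
                then seqProb (∑ k ∈ T.erase i, w k) w τ else 0) := by
              refine Finset.sum_congr rfl fun τ _ => ?_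
              rw [if_congr (cond_cons T i τ) rfl rfl]
              by_cases h : Function.Injective τ ∧ ∀ t, τ t ∈ T.erase i
              · rw [if_pos ⟨hi, h⟩, if_pos h, seqProb_cons, herase]
              · rw [if_neg (fun hh => h hh.2), if_neg h, mul_zero]
          _ = w i / c := by
              rw [← Finset.mul_sum, ih (T.erase i) hcard, mul_one]
      · rw [if_neg hi]
        refine Finset.sum_eq_zero fun τ _ => ?_
        rw [if_congr (cond_cons T i τ) rfl rfl, if_neg (fun h => hi h.1)]
    rw [Finset.sum_congr rfl fun i _ => key i, Finset.sum_ite_mem, Finset.univ_inter,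
      ← Finset.sum_div, div_self hc.ne']

lemma miss_sum {p : ℕ} (w : Fin p → ℝ) (b : ℝ) (hb : 0 < b) (hw : ∀ i, b ≤ w i) :
    ∀ (d : ℕ) (T : Finset (Fin p)) (j : Fin p), j ∈ T → d ≤ T.card →
      ∑ σ : Fin d → Fin p,
        (if Function.Injective σ ∧ (∀ t, σ t ∈ T) ∧ (∀ t, σ t ≠ j)
          then seqProb (∑ i ∈ T, w i) w σ else 0)
        ≤ ((∑ i ∈ T, w i) - d * b) / (∑ i ∈ T, w i) := by
  intro d
  induction d with
  | zero =>
    intro T j hj _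
    have hc : 0 < ∑ i ∈ T, w i := by
      have h1 := card_b_le w hw T
      have h2 : (1 : ℝ) ≤ (T.card : ℝ) := by
        exact_mod_cast Nat.one_le_iff_ne_zero.mpr (Finset.card_ne_zero_of_mem hj)
      nlinarith
    have h1 : ∀ σ : Fin 0 → Fin p,
        (if Function.Injective σ ∧ (∀ t, σ t ∈ T) ∧ (∀ t, σ t ≠ j)
          then seqProb (∑ i ∈ T, w i) w σ else 0) = 1 := by
      intro σ
      rw [if_pos ⟨Function.injective_of_subsingleton σ, fun t => Fin.elim0 t, fun t => Fin.elim0 t⟩,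
        seqProb_zero]
    rw [Finset.sum_congr rfl fun σ _ => h1 σ, Finset.sum_const, nsmul_eq_mul, mul_one]
    have h2 : (Fintype.card (Fin 0 → Fin p) : ℝ) = 1 := by simp
    rw [Finset.card_univ, h2, Nat.cast_zero, zero_mul, sub_zero, div_self hc.ne']
  | succ d ih =>
    intro T j hj hT
    have hcard1 : (1 : ℝ) ≤ (T.card : ℝ) := by
      exact_mod_cast Nat.one_le_iff_ne_zero.mpr (Finset.card_ne_zero_of_mem hj)
    have hcb := card_b_le w hw T
    have hdT : ((d : ℝ) + 1) ≤ (T.card : ℝ) := by exact_mod_cast hT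
    have hc : 0 < ∑ i ∈ T, w i := by nlinarith
    set c := ∑ i ∈ T, w i with hcdef
    have hcd : ((d : ℝ) + 1) * b ≤ c := by nlinarith
    rw [sum_pi_succ]
    by_cases hne : T.erase j = ∅
    · have key : ∀ i : Fin p,
          (∑ τ : Fin d → Fin p,
            (if Function.Injective (Fin.cons i τ : Fin (d+1) → Fin p) ∧
                (∀ t, (Fin.cons i τ : Fin (d+1) → Fin p) t ∈ T) ∧
                (∀ t, (Fin.cons i τ : Fin (d+1) → Fin p) t ≠ j)
              then seqProb c w (Fin.cons i τ : Fin (d+1) → Fin p) else 0)) = 0 := by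
        intro i
        refine Finset.sum_eq_zero fun τ _ => ?_
        rw [if_congr (cond_cons' T j i τ) rfl rfl, if_neg]
        rintro ⟨hi, -⟩
        rw [hne] at hi
        exact absurd hi (Finset.notMem_empty i)
      rw [Finset.sum_congr rfl fun i _ => key i, Finset.sum_const, smul_zero]
      push_cast
      apply div_nonneg (by linarith) hc.le
    · obtain ⟨i₀, hi₀⟩ := Finset.nonempty_iff_ne_empty.mpr hne
      have hT2 : 2 ≤ T.card := by
        have h1 : (T.erase j).card + 1 = T.card := by
          rw [Finset.card_erase_of_mem hj]
          have := Finset.card_ne_zero_of_mem hj; omega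
        have := Finset.card_ne_zero_of_mem hi₀; omega
      have hT2' : (2 : ℝ) ≤ (T.card : ℝ) := by exact_mod_cast hT2
      have hcb' : 0 < c - b := by nlinarith
      set K := (c - ((d:ℝ) + 1) * b) / (c - b) with hK
      have hK0 : 0 ≤ K := by
        apply div_nonneg _ hcb'.le
        push_cast at hcd ⊢; linarith
      have key : ∀ i : Fin p,
          (∑ τ : Fin d → Fin p,
            (if Function.Injective (Fin.cons i τ : Fin (d+1) → Fin p) ∧
                (∀ t, (Fin.cons i τ : Fin (d+1) → Fin p) t ∈ T) ∧
                (∀ t, (Fin.cons i τ : Fin (d+1) → Fin p) t ≠ j)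
              then seqProb c w (Fin.cons i τ : Fin (d+1) → Fin p) else 0))
            ≤ if i ∈ T.erase j then (w i / c) * K else 0 := by
        intro i
        by_cases hi : i ∈ T.erase j
        · rw [if_pos hi]
          obtain ⟨hij, hiT⟩ := Finset.mem_erase.mp hi
          have herase : c - w i = ∑ k ∈ T.erase i, w k := by
            rw [Finset.sum_erase_eq_sub hiT]
          have hje : j ∈ T.erase i := Finset.mem_erase.mpr ⟨fun h => hij h.symm, hj⟩
          have hcardi : d ≤ (T.erase i).card := by
            rw [Finset.card_erase_of_mem hiT]; omega
          have hwi : b ≤ w i := hw i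
          have hcwi : 0 < c - w i := by
            rw [herase]
            have h1 := card_b_le w hw (T.erase i)
            have h2 : (1:ℝ) ≤ ((T.erase i).card : ℝ) := by
              exact_mod_cast Nat.one_le_iff_ne_zero.mpr (Finset.card_ne_zero_of_mem hje)
            nlinarith
          calc ∑ τ : Fin d → Fin p,
                (if Function.Injective (Fin.cons i τ : Fin (d+1) → Fin p) ∧
                    (∀ t, (Fin.cons i τ : Fin (d+1) → Fin p) t ∈ T) ∧
                    (∀ t, (Fin.cons i τ : Fin (d+1) → Fin p) t ≠ j)
                  then seqProb c w (Fin.cons i τ : Fin (d+1) → Fin p) else 0)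
              = (w i / c) * ∑ τ : Fin d → Fin p,
                (if Function.Injective τ ∧ (∀ t, τ t ∈ T.erase i) ∧ (∀ t, τ t ≠ j)
                  then seqProb (∑ k ∈ T.erase i, w k) w τ else 0) := by
                rw [Finset.mul_sum]
                refine Finset.sum_congr rfl fun τ _ => ?_
                rw [if_congr (cond_cons' T j i τ) rfl rfl]
                by_cases h : Function.Injective τ ∧ (∀ t, τ t ∈ T.erase i) ∧ ∀ t, τ t ≠ j
                · rw [if_pos ⟨hi, h⟩, if_pos h, seqProb_cons, herase]
                · rw [if_neg (fun hh => h hh.2), if_neg h, mul_zero]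
            _ ≤ (w i / c) * (((∑ k ∈ T.erase i, w k) - d * b) / (∑ k ∈ T.erase i, w k)) := by
                exact mul_le_mul_of_nonneg_left (ih (T.erase i) j hje hcardi)
                  (div_nonneg (hb.le.trans (hw i)) hc.le)
            _ ≤ (w i / c) * K := by
                apply mul_le_mul_of_nonneg_left _ (div_nonneg (hb.le.trans (hw i)) hc.le)
                rw [← herase, hK, div_le_div_iff₀ hcwi hcb']
                have hdb : 0 ≤ (d:ℝ) * b := by positivity
                nlinarith
        · rw [if_neg hi]
          refine le_of_eq (Finset.sum_eq_zero fun τ _ => ?_)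
          rw [if_congr (cond_cons' T j i τ) rfl rfl, if_neg (fun h => hi h.1)]
      push_cast
      calc ∑ i : Fin p, ∑ τ : Fin d → Fin p,
              (if Function.Injective (Fin.cons i τ : Fin (d+1) → Fin p) ∧
                  (∀ t, (Fin.cons i τ : Fin (d+1) → Fin p) t ∈ T) ∧
                  (∀ t, (Fin.cons i τ : Fin (d+1) → Fin p) t ≠ j)
                then seqProb c w (Fin.cons i τ : Fin (d+1) → Fin p) else 0)
          ≤ ∑ i : Fin p, (if i ∈ T.erase j then (w i / c) * K else 0) :=
            Finset.sum_le_sum fun i _ => key i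
        _ = ((c - w j) / c) * K := by
            rw [Finset.sum_ite_mem, Finset.univ_inter, ← Finset.sum_mul, ← Finset.sum_div,
              Finset.sum_erase_eq_sub hj]
        _ ≤ ((c - b) / c) * K := by
            apply mul_le_mul_of_nonneg_right _ hK0
            exact (div_le_div_iff_of_pos_right hc).mpr (by linarith [hw j])
        _ = (c - (↑d + 1) * b) / c := by
            rw [hK]; field_simp

/-- The probability that `j` appears among the first `d` draws is at least `d * b`. -/
lemma hit_sum {p : ℕ} (w : Fin p → ℝ) (b : ℝ) (hb : 0 < b) (hw : ∀ i, b ≤ w i)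
    (hw1 : ∑ i, w i = 1) (j : Fin p) (d : ℕ) (hd : d ≤ p) :
    (d : ℝ) * b ≤
      ∑ σ : Fin d → Fin p,
        (if Function.Injective σ ∧ ∃ t, σ t = j then seqSampleProb w σ else 0) := by
  have hcardT : d ≤ (Finset.univ : Finset (Fin p)).card := by
    rwa [Finset.card_univ, Fintype.card_fin]
  have htot := total_sum w b hb hw d Finset.univ hcardT
  have hmiss := miss_sum w b hb hw d Finset.univ j (Finset.mem_univ j) hcardT
  have hsum_univ : ∑ i ∈ (Finset.univ : Finset (Fin p)), w i = 1 := hw1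
  rw [hsum_univ] at htot hmiss
  have split : ∀ σ : Fin d → Fin p,
      (if Function.Injective σ ∧ ∀ t, σ t ∈ (Finset.univ : Finset (Fin p))
          then seqProb 1 w σ else 0)
        = (if Function.Injective σ ∧ (∀ t, σ t ∈ (Finset.univ : Finset (Fin p))) ∧
              (∀ t, σ t ≠ j) then seqProb 1 w σ else 0)
          + (if Function.Injective σ ∧ ∃ t, σ t = j then seqProb 1 w σ else 0) := by
    intro σ
    by_cases hinj : Function.Injective σ
    · by_cases hex : ∃ t, σ t = j
      · rw [if_pos ⟨hinj, fun t => Finset.mem_univ _⟩, if_neg, if_pos ⟨hinj, hex⟩, zero_add]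
        rintro ⟨-, -, hne⟩
        obtain ⟨t, ht⟩ := hex
        exact hne t ht
      · have hall : ∀ t, σ t ≠ j := by push_neg at hex; exact hex
        rw [if_pos ⟨hinj, fun t => Finset.mem_univ _⟩,
          if_pos ⟨hinj, fun t => Finset.mem_univ _, hall⟩,
          if_neg (fun h => hex h.2), add_zero]
    · rw [if_neg (fun h => hinj h.1), if_neg (fun h => hinj h.1),
        if_neg (fun h => hinj h.1), add_zero]
  rw [Finset.sum_congr rfl fun σ _ => split σ, Finset.sum_add_distrib] at htot
  have hseq : ∀ σ : Fin d → Fin p, seqSampleProb w σ = seqProb 1 w σ := by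
    intro σ; rw [seqSampleProb_eq, hw1]
  calc (d : ℝ) * b = 1 - (1 - d * b) / 1 := by rw [div_one]; ring
    _ ≤ 1 - ∑ σ : Fin d → Fin p,
        (if Function.Injective σ ∧ (∀ t, σ t ∈ (Finset.univ : Finset (Fin p))) ∧
            (∀ t, σ t ≠ j) then seqProb 1 w σ else 0) := by linarith
    _ = ∑ σ : Fin d → Fin p,
        (if Function.Injective σ ∧ ∃ t, σ t = j then seqProb 1 w σ else 0) := by linarith
    _ = ∑ σ : Fin d → Fin p,
        (if Function.Injective σ ∧ ∃ t, σ t = j then seqSampleProb w σ else 0) := by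
        refine Finset.sum_congr rfl fun σ _ => ?_
        rw [hseq σ]

end Stmt14Aux

open Stmt14Aux in
/-- Let `1 ≤ D ≤ p`, `C₀ > 0`, and `η̃` a probability vector with
`η̃_j ≥ (C₀/p)/(D + C₀)` for every `j`.  If `S ∼ R(U₀, p, η̃)`, then for every `j` and
every `d ∈ {1,…,D}`: `P(j ∈ S | |S| = d) ≥ C₀·d/((D+C₀)·p)`, and consequently
`P(j ∈ S) ≥ (D+1)·C₀/(2(D+C₀)·p)`. -/
theorem stmt_14 (p D : ℕ) (hD : 1 ≤ D) (hDp : D ≤ p)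
    (C₀ : ℝ) (hC₀ : 0 < C₀)
    (w : Fin p → ℝ) (hw0 : ∀ i, 0 ≤ w i) (hw1 : ∑ i, w i = 1)
    (hwlow : ∀ i, (C₀ / p) / (D + C₀) ≤ w i)
    (j : Fin p) :
    (∀ d ∈ Finset.Icc 1 D,
      C₀ * d / ((D + C₀) * p) ≤
        ∑ A ∈ (Finset.univ : Finset (Finset (Fin p))).filter
            fun A => A.card = d ∧ j ∈ A,
          (D : ℝ) * rmnMass p D w A)
    ∧ (D + 1 : ℝ) * C₀ / (2 * (D + C₀) * p) ≤
        ∑ A ∈ (Finset.univ : Finset (Finset (Fin p))).filter fun A => j ∈ A,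
          rmnMass p D w A := by
  classical
  have hp1 : 1 ≤ p := le_trans hD hDp
  have hp0 : (0:ℝ) < p := by exact_mod_cast hp1
  have hDC : (0:ℝ) < (D:ℝ) + C₀ := by
    have : (0:ℝ) ≤ (D:ℝ) := Nat.cast_nonneg D
    linarith
  have hDR : (0:ℝ) < (D:ℝ) := by exact_mod_cast hD
  set b := (C₀ / p) / ((D:ℝ) + C₀) with hbdef
  have hb : 0 < b := by positivity
  -- Rewriting `D * rmnMass` as a sum over ordered tuples
  have rmn_eq : ∀ (d : ℕ), 1 ≤ d → d ≤ D → ∀ A : Finset (Fin p), A.card = d →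
      (D:ℝ) * rmnMass p D w A
        = ∑ σ : Fin d → Fin p,
            (if Function.Injective σ ∧ Finset.image σ Finset.univ = A
              then seqSampleProb w σ else 0) := by
    intro d hd1 hdD A hA
    subst hA
    rw [rmnMass, if_pos ⟨hd1, hdD⟩, ← Finset.sum_filter, ← mul_assoc, mul_one_div,
      div_self hDR.ne', one_mul]
  have part1 : ∀ d, 1 ≤ d → d ≤ D →
      C₀ * d / ((D + C₀) * p) ≤
        ∑ A ∈ (Finset.univ : Finset (Finset (Fin p))).filter
            (fun A => A.card = d ∧ j ∈ A), (D : ℝ) * rmnMass p D w A := by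
    intro d hd1 hdD
    have hinner : ∀ σ : Fin d → Fin p,
        (∑ A ∈ (Finset.univ : Finset (Finset (Fin p))).filter
            (fun A => A.card = d ∧ j ∈ A),
          (if Function.Injective σ ∧ Finset.image σ Finset.univ = A
            then seqSampleProb w σ else 0))
        = (if Function.Injective σ ∧ ∃ t, σ t = j then seqSampleProb w σ else 0) := by
      intro σ
      by_cases hinj : Function.Injective σ
      · by_cases hex : ∃ t, σ t = j
        · rw [if_pos ⟨hinj, hex⟩]
          have hmem : Finset.image σ Finset.univ ∈
              (Finset.univ : Finset (Finset (Fin p))).filter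
                (fun A => A.card = d ∧ j ∈ A) := by
            simp only [Finset.mem_filter, Finset.mem_univ, true_and]
            constructor
            · rw [Finset.card_image_of_injective _ hinj, Finset.card_univ, Fintype.card_fin]
            · obtain ⟨t, ht⟩ := hex
              exact Finset.mem_image.mpr ⟨t, Finset.mem_univ t, ht⟩
          have h0 : ∀ A ∈ (Finset.univ : Finset (Finset (Fin p))).filter
              (fun A => A.card = d ∧ j ∈ A), A ≠ Finset.image σ Finset.univ →
              (if Function.Injective σ ∧ Finset.image σ Finset.univ = A
                then seqSampleProb w σ else 0) = 0 :=
            fun A _ hA => if_neg (fun h => hA h.2.symm)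
          rw [Finset.sum_eq_single_of_mem _ hmem h0, if_pos ⟨hinj, rfl⟩]
        · rw [if_neg (fun h => hex h.2)]
          refine Finset.sum_eq_zero fun A hA => ?_
          rw [if_neg]
          rintro ⟨-, rfl⟩
          obtain ⟨-, hjA⟩ := (Finset.mem_filter.mp hA).2
          obtain ⟨t, -, ht⟩ := Finset.mem_image.mp hjA
          exact hex ⟨t, ht⟩
      · have h1 : (if Function.Injective σ ∧ ∃ t, σ t = j
            then seqSampleProb w σ else 0) = 0 := if_neg (fun h => hinj h.1)
        rw [h1]
        exact Finset.sum_eq_zero fun A _ => if_neg (fun h => hinj h.1)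
    have hAeq : ∑ A ∈ (Finset.univ : Finset (Finset (Fin p))).filter
            (fun A => A.card = d ∧ j ∈ A), (D : ℝ) * rmnMass p D w A
        = ∑ σ : Fin d → Fin p,
            (if Function.Injective σ ∧ ∃ t, σ t = j then seqSampleProb w σ else 0) := by
      rw [Finset.sum_congr rfl fun A hA =>
        rmn_eq d hd1 hdD A ((Finset.mem_filter.mp hA).2.1), Finset.sum_comm]
      exact Finset.sum_congr rfl fun σ _ => hinner σ
    rw [hAeq]
    calc C₀ * d / ((D + C₀) * p) = (d:ℝ) * b := by
          rw [hbdef]; field_simp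
      _ ≤ ∑ σ : Fin d → Fin p,
            (if Function.Injective σ ∧ ∃ t, σ t = j then seqSampleProb w σ else 0) :=
          Stmt14Aux.hit_sum w b hb (fun i => hwlow i) hw1 j d (le_trans hdD hDp)
  refine ⟨fun d hd => ?_, ?_⟩
  · obtain ⟨hd1, hdD⟩ := Finset.mem_Icc.mp hd
    exact part1 d hd1 hdD
  · have hstep1 : ∑ A ∈ (Finset.univ : Finset (Finset (Fin p))).filter (fun A => j ∈ A),
          rmnMass p D w A
        = ∑ A ∈ (Finset.univ : Finset (Finset (Fin p))).filter
            (fun A => (A.card ∈ Finset.Icc 1 D) ∧ j ∈ A), rmnMass p D w A := by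
      symm
      apply Finset.sum_subset
      · intro A hA
        simp only [Finset.mem_filter] at *
        exact ⟨hA.1, hA.2.2⟩
      · intro A hA hA'
        simp only [Finset.mem_filter, Finset.mem_Icc] at hA hA'
        rw [rmnMass, if_neg]
        intro h
        exact hA' ⟨hA.1, ⟨h.1, h.2⟩, hA.2⟩
    have hstep2 : ∑ A ∈ (Finset.univ : Finset (Finset (Fin p))).filter
            (fun A => (A.card ∈ Finset.Icc 1 D) ∧ j ∈ A), rmnMass p D w A
        = ∑ d ∈ Finset.Icc 1 D,
            ∑ A ∈ (Finset.univ : Finset (Finset (Fin p))).filter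
              (fun A => A.card = d ∧ j ∈ A), rmnMass p D w A := by
      rw [← Finset.sum_fiberwise_of_maps_to (g := Finset.card)
        (fun A hA => (Finset.mem_filter.mp hA).2.1) (rmnMass p D w)]
      refine Finset.sum_congr rfl fun d hd => ?_
      refine Finset.sum_congr ?_ fun _ _ => rfl
      ext A
      simp only [Finset.mem_filter, Finset.mem_univ, true_and, Finset.mem_Icc]
      rw [Finset.mem_Icc] at hd
      constructor
      · rintro ⟨⟨-, hj⟩, hc⟩
        exact ⟨hc, hj⟩
      · rintro ⟨hc, hj⟩
        exact ⟨⟨by rw [hc]; omega, hj⟩, hc⟩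
    have hgauss : ∀ n : ℕ, ∑ d ∈ Finset.Icc 1 n, (d:ℝ) = n * (n+1) / 2 := by
      intro n
      induction n with
      | zero => simp
      | succ n ihn =>
        rw [Finset.sum_Icc_succ_top (by omega), ihn]
        push_cast; ring
    have hterm : ∀ d ∈ Finset.Icc 1 D,
        C₀ * d / ((D + C₀) * p) / D ≤
          ∑ A ∈ (Finset.univ : Finset (Finset (Fin p))).filter
            (fun A => A.card = d ∧ j ∈ A), rmnMass p D w A := by
      intro d hd
      obtain ⟨hd1, hdD⟩ := Finset.mem_Icc.mp hd
      have h := part1 d hd1 hdD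
      rw [← Finset.mul_sum] at h
      rw [div_le_iff₀ hDR]
      linarith [h]
    rw [hstep1, hstep2]
    calc (D + 1 : ℝ) * C₀ / (2 * (D + C₀) * p)
        = ∑ d ∈ Finset.Icc 1 D, C₀ * d / ((D + C₀) * p) / D := by
          have heach : ∀ d : ℕ, C₀ * (d:ℝ) / ((D + C₀) * p) / D
              = (C₀ / ((D + C₀) * p * D)) * d := by
            intro d
            rw [div_div, div_mul_eq_mul_div, mul_comm C₀ (d:ℝ), mul_div_assoc]
          rw [Finset.sum_congr rfl fun d _ => heach d, ← Finset.mul_sum, hgauss D]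
          field_simp
          try ring
      _ ≤ _ := Finset.sum_le_sum hterm

end
end

section
/- (Proposition A.1(i).) Suppose the signal set decomposes as S* = S*_{[0]} ∪ S*_{[1]} and Assumption A holds: (a) for every j ∈ S*_{[0]} and every d ≥ 1, Cr(S) − Cr(S') > 2ε_n whenever |S|, |S'| ≤ D, |S ∩ S*| < d, |S' ∩ S*| ≥ d, j ∈ S', and j ∉ S; (b) for every j ∈ S*_{[1]} and every d ≥ |S*_{[0]}| + 1, the same inequality holds under the same constraints. Then, in the asymptotic regime n → ∞ with D ≪ p and fixed |S*| = p*, whenever B₂ ≍ (p/D)^{|S*_{[0]}|+1}, Assumption 1 holds: for each j ∈ S* there is S̄_j ∋ j with |S̄_j| ≤ D such that B₂ · inf_{j∈S*} p_j ≳ 1 and limsup_{n,D,B₂→∞} B₂ · sup_{j∈S*} E[δ_j(S^(−j))^{B₂ p_j/2}] < ∞. -/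
open MeasureTheory Filter

noncomputable section

def pjOf (p D : ℕ) (Sb : Finset (Fin p)) : ℝ :=
  (1 / (D : ℝ)) * ∑ d ∈ Finset.Icc Sb.card D,
    ((p - Sb.card).choose (d - Sb.card) : ℝ) / (p.choose d)

def lawJ (p D : ℕ) (Sb A : Finset (Fin p)) : ℝ :=
  if Sb ⊆ A ∧ A.card ≤ D then 1 / (D * pjOf p D Sb * (p.choose A.card)) else 0

def lawNotJ (p D : ℕ) (Sb A : Finset (Fin p)) : ℝ :=
  if 1 ≤ A.card ∧ A.card ≤ D ∧ ¬ Sb ⊆ A then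
    1 / (D * (1 - pjOf p D Sb) * (p.choose A.card))
  else 0

open Classical in
def deltaJ (p D : ℕ) (Cr : Finset (Fin p) → ℝ) (εn : ℝ) (Sb T : Finset (Fin p)) : ℝ :=
  ∑ A : Finset (Fin p), lawJ p D Sb A * (if Cr T - Cr A < 2 * εn then 1 else 0)

def ETerm (p D B₂ : ℕ) (Cr : Finset (Fin p) → ℝ) (εn : ℝ) (Sb : Finset (Fin p)) : ℝ :=
  ∑ A : Finset (Fin p),
    lawNotJ p D Sb A * (deltaJ p D Cr εn Sb A) ^ ((B₂ : ℝ) * pjOf p D Sb / 2)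

section Stmt18Aux

open Finset

lemma aux_card_supersets {p : ℕ} (Sb : Finset (Fin p)) {d : ℕ} (hkd : Sb.card ≤ d) :
    (Finset.univ.filter fun A : Finset (Fin p) => Sb ⊆ A ∧ A.card = d).card
      = (p - Sb.card).choose (d - Sb.card) := by
  classical
  have hcompl : (Sbᶜ : Finset (Fin p)).card = p - Sb.card := by
    rw [Finset.card_compl, Fintype.card_fin]
  rw [← hcompl, ← Finset.card_powersetCard]
  apply Finset.card_bij' (fun A _ => A \ Sb) (fun B _ => B ∪ Sb)
  · intro A hA
    simp only [Finset.mem_filter, Finset.mem_univ, true_and] at hA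
    rw [Finset.mem_powersetCard]
    constructor
    · intro x hx
      simp only [Finset.mem_compl]
      exact (Finset.mem_sdiff.mp hx).2
    · rw [Finset.card_sdiff_of_subset hA.1, hA.2]
  · intro B hB
    rw [Finset.mem_powersetCard] at hB
    simp only [Finset.mem_filter, Finset.mem_univ, true_and]
    have hdisj : Disjoint B Sb := by
      rw [Finset.disjoint_left]
      intro x hxB hxSb
      have := hB.1 hxB
      simp only [Finset.mem_compl] at this
      exact this hxSb
    constructor
    · exact Finset.subset_union_right
    · rw [Finset.card_union_of_disjoint hdisj, hB.2]
      omega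
  · intro A hA
    simp only [Finset.mem_filter, Finset.mem_univ, true_and] at hA
    exact Finset.sdiff_union_of_subset hA.1
  · intro B hB
    rw [Finset.mem_powersetCard] at hB
    have hdisj : Disjoint B Sb := by
      rw [Finset.disjoint_left]
      intro x hxB hxSb
      have := hB.1 hxB
      simp only [Finset.mem_compl] at this
      exact this hxSb
    exact Finset.union_sdiff_cancel_right hdisj

lemma aux_sum_ite {p D : ℕ} (Sb : Finset (Fin p)) (f : ℕ → ℝ) :
    ∑ A : Finset (Fin p), (if Sb ⊆ A ∧ A.card ≤ D then f A.card else 0)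
      = ∑ d ∈ Finset.Icc Sb.card D, ((p - Sb.card).choose (d - Sb.card) : ℝ) * f d := by
  classical
  rw [← Finset.sum_filter]
  have hmap : ∀ A ∈ Finset.univ.filter (fun A : Finset (Fin p) => Sb ⊆ A ∧ A.card ≤ D),
      A.card ∈ Finset.Icc Sb.card D := by
    intro A hA
    simp only [Finset.mem_filter, Finset.mem_univ, true_and] at hA
    exact Finset.mem_Icc.mpr ⟨Finset.card_le_card hA.1, hA.2⟩
  rw [← Finset.sum_fiberwise_of_maps_to' hmap f]
  apply Finset.sum_congr rfl
  intro d hd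
  have hIcc := Finset.mem_Icc.mp hd
  rw [Finset.sum_const]
  have hfib : ((Finset.univ.filter (fun A : Finset (Fin p) => Sb ⊆ A ∧ A.card ≤ D)).filter
      (fun A => A.card = d)) = Finset.univ.filter (fun A : Finset (Fin p) => Sb ⊆ A ∧ A.card = d) := by
    rw [Finset.filter_filter]
    apply Finset.filter_congr
    intro A _
    constructor
    · rintro ⟨⟨h1, _⟩, h3⟩; exact ⟨h1, h3⟩
    · rintro ⟨h1, h3⟩; exact ⟨⟨h1, h3 ▸ hIcc.2⟩, h3⟩
  rw [hfib, aux_card_supersets Sb hIcc.1, nsmul_eq_mul]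


lemma aux_pjOf_nonneg {p D : ℕ} (Sb : Finset (Fin p)) : 0 ≤ pjOf p D Sb := by
  unfold pjOf
  apply mul_nonneg (by positivity)
  apply Finset.sum_nonneg
  intro d _
  positivity

lemma aux_pjOf_closed {p D : ℕ} (Sb : Finset (Fin p)) (hkD : Sb.card ≤ D) (hDp : D ≤ p) :
    pjOf p D Sb = ((D + 1).choose (Sb.card + 1) : ℝ) / (D * (p.choose Sb.card)) := by
  unfold pjOf
  have hterm : ∀ d ∈ Finset.Icc Sb.card D,
      ((p - Sb.card).choose (d - Sb.card) : ℝ) / (p.choose d)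
        = (d.choose Sb.card : ℝ) / (p.choose Sb.card) := by
    intro d hd
    simp only [Finset.mem_Icc] at hd
    have hdp : d ≤ p := hd.2.trans hDp
    have hident := Nat.choose_mul (n := p) hd.1
    have h1 : (0:ℝ) < (p.choose d : ℝ) := by exact_mod_cast Nat.choose_pos hdp
    have h2 : (0:ℝ) < (p.choose Sb.card : ℝ) := by exact_mod_cast Nat.choose_pos (hd.1.trans hdp)
    rw [div_eq_div_iff h1.ne' h2.ne']
    have := congrArg (fun x : ℕ => (x : ℝ)) hident
    push_cast at this
    linarith
  rw [Finset.sum_congr rfl hterm, ← Finset.sum_div, ← Nat.cast_sum, Nat.sum_Icc_choose]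
  field_simp

lemma aux_pjOf_pos {p D : ℕ} (Sb : Finset (Fin p)) (hD : 1 ≤ D) (hkD : Sb.card ≤ D)
    (hDp : D ≤ p) : 0 < pjOf p D Sb := by
  rw [aux_pjOf_closed Sb hkD hDp]
  have h1 : 0 < (D + 1).choose (Sb.card + 1) := Nat.choose_pos (by omega)
  have h2 : 0 < p.choose Sb.card := Nat.choose_pos (hkD.trans hDp)
  have hD0 : (0:ℝ) < D := by exact_mod_cast hD
  have h1' : (0:ℝ) < ((D + 1).choose (Sb.card + 1) : ℝ) := by exact_mod_cast h1
  have h2' : (0:ℝ) < (p.choose Sb.card : ℝ) := by exact_mod_cast h2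
  positivity

lemma aux_sum_lawJ {p D : ℕ} (Sb : Finset (Fin p)) (hD : 1 ≤ D) (hkD : Sb.card ≤ D)
    (hDp : D ≤ p) : ∑ A : Finset (Fin p), lawJ p D Sb A = 1 := by
  have hpj := aux_pjOf_pos Sb hD hkD hDp
  unfold lawJ
  rw [aux_sum_ite Sb (fun d => 1 / (D * pjOf p D Sb * (p.choose d)))]
  have hterm : ∀ d ∈ Finset.Icc Sb.card D,
      ((p - Sb.card).choose (d - Sb.card) : ℝ) * (1 / (D * pjOf p D Sb * (p.choose d)))
        = (1 / pjOf p D Sb) * ((1 / (D:ℝ)) * (((p - Sb.card).choose (d - Sb.card) : ℝ) / (p.choose d))) := by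
    intro d _; ring
  rw [Finset.sum_congr rfl hterm, ← Finset.mul_sum, ← Finset.mul_sum]
  have : (1 / (D:ℝ)) * ∑ d ∈ Finset.Icc Sb.card D,
      ((p - Sb.card).choose (d - Sb.card) : ℝ) / (p.choose d) = pjOf p D Sb := rfl
  rw [this, one_div, inv_mul_cancel₀ hpj.ne']

lemma aux_lawJ_nonneg {p D : ℕ} (Sb A : Finset (Fin p)) : 0 ≤ lawJ p D Sb A := by
  have h := aux_pjOf_nonneg (D := D) Sb
  unfold lawJ
  split
  · apply div_nonneg zero_le_one
    exact mul_nonneg (mul_nonneg (Nat.cast_nonneg _) h) (Nat.cast_nonneg _)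
  · exact le_refl 0

lemma aux_deltaJ_nonneg {p D : ℕ} (Cr : Finset (Fin p) → ℝ) (εn : ℝ) (Sb T : Finset (Fin p)) :
    0 ≤ deltaJ p D Cr εn Sb T := by
  unfold deltaJ
  apply Finset.sum_nonneg
  intro A _
  apply mul_nonneg (aux_lawJ_nonneg Sb A)
  split <;> norm_num

lemma aux_deltaJ_le_one {p D : ℕ} (Cr : Finset (Fin p) → ℝ) (εn : ℝ) (Sb T : Finset (Fin p))
    (hD : 1 ≤ D) (hkD : Sb.card ≤ D) (hDp : D ≤ p) :
    deltaJ p D Cr εn Sb T ≤ 1 := by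
  unfold deltaJ
  calc ∑ A : Finset (Fin p), lawJ p D Sb A * (if Cr T - Cr A < 2 * εn then 1 else 0)
      ≤ ∑ A : Finset (Fin p), lawJ p D Sb A := by
        apply Finset.sum_le_sum
        intro A _
        apply mul_le_of_le_one_right (aux_lawJ_nonneg Sb A)
        split <;> norm_num
    _ = 1 := aux_sum_lawJ Sb hD hkD hDp


lemma aux_deltaJ_vanish {p D : ℕ} {Cr : Finset (Fin p) → ℝ} {εn : ℝ} {s0 : ℕ}
    (Sstar S0 : Finset (Fin p)) (hS0card : S0.card = s0) (hS0sub : S0 ⊆ Sstar)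
    (hA0 : ∀ j ∈ S0, ∀ d : ℕ, 1 ≤ d → ∀ S S' : Finset (Fin p), S.card ≤ D → S'.card ≤ D →
      (S ∩ Sstar).card < d → d ≤ (S' ∩ Sstar).card → j ∈ S' → j ∉ S → 2 * εn < Cr S - Cr S')
    (hA1' : ∀ t ∈ Sstar, t ∉ S0 → ∀ S S' : Finset (Fin p), S.card ≤ D → S'.card ≤ D →
      (S ∩ Sstar).card < s0 + 1 → s0 + 1 ≤ (S' ∩ Sstar).card → t ∈ S' → t ∉ S →
      2 * εn < Cr S - Cr S')
    (t : Fin p) (ht : t ∈ Sstar)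
    (A : Finset (Fin p)) (hAD : A.card ≤ D) (hnsub : ¬ S0 ∪ {t} ⊆ A)
    (hsmall : (A ∩ Sstar).card < (S0 ∪ {t}).card) :
    deltaJ p D Cr εn (S0 ∪ {t}) A = 0 := by
  classical
  unfold deltaJ
  apply Finset.sum_eq_zero
  intro A' _
  rcases eq_or_ne (lawJ p D (S0 ∪ {t}) A') 0 with h | h
  · rw [h, zero_mul]
  · have hc : (S0 ∪ {t}) ⊆ A' ∧ A'.card ≤ D := by
      by_contra hcc
      apply h
      unfold lawJ
      rw [if_neg hcc]
    have hSbstar : (S0 ∪ {t}) ⊆ Sstar :=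
      Finset.union_subset hS0sub (Finset.singleton_subset_iff.mpr ht)
    have hbig : (S0 ∪ {t}).card ≤ (A' ∩ Sstar).card :=
      Finset.card_le_card (Finset.subset_inter hc.1 hSbstar)
    have hnotlt : ¬ (Cr A - Cr A' < 2 * εn) := by
      obtain ⟨j0, hj0mem, hj0A⟩ := Finset.not_subset.mp hnsub
      have hj0A' : j0 ∈ A' := hc.1 hj0mem
      have hcase : ∀ j1 ∈ S0, j1 ∈ A' → j1 ∉ A → ¬ (Cr A - Cr A' < 2 * εn) := by
        intro j1 hj1S0 hj1A' hj1A
        have := hA0 j1 hj1S0 ((A ∩ Sstar).card + 1) (by omega) A A' hAD hc.2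
          (Nat.lt_succ_self _) (by omega) hj1A' hj1A
        intro hlt; linarith
      rcases Finset.mem_union.mp hj0mem with hj0S0 | hj0t
      · exact hcase j0 hj0S0 hj0A' hj0A
      · have hj0t' : j0 = t := Finset.mem_singleton.mp hj0t
        subst hj0t'
        by_cases htS0 : j0 ∈ S0
        · exact hcase j0 htS0 hj0A' hj0A
        · have hcardSb : (S0 ∪ {j0}).card = s0 + 1 := by
            rw [Finset.union_comm, ← Finset.insert_eq, Finset.card_insert_of_notMem htS0, hS0card]
          have := hA1' j0 ht htS0 A A' hAD hc.2 (by omega) (by omega) hj0A' hj0A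
          intro hlt; linarith
    rw [if_neg hnotlt, mul_zero]

lemma aux_sum_ite_const {p D : ℕ} (T : Finset (Fin p)) (a : ℝ) :
    ∑ A : Finset (Fin p), (if T ⊆ A ∧ A.card ≤ D then a / (D * (p.choose A.card)) else 0)
      = a * pjOf p D T := by
  rw [aux_sum_ite T (fun d => a / (D * (p.choose d)))]
  have hterm : ∀ d ∈ Finset.Icc T.card D,
      ((p - T.card).choose (d - T.card) : ℝ) * (a / (D * (p.choose d)))
        = a * ((1 / (D:ℝ)) * (((p - T.card).choose (d - T.card) : ℝ) / (p.choose d))) := by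
    intro d _; ring
  rw [Finset.sum_congr rfl hterm, ← Finset.mul_sum, ← Finset.mul_sum]
  rfl

lemma aux_sum_bad {p D : ℕ} (Sstar Sb : Finset (Fin p)) (k₁ : ℕ)
    (hD : 1 ≤ D) (hDp : D ≤ p) (hk₁D : k₁ ≤ D)
    (hpj : pjOf p D Sb ≤ 1 / 2) :
    ∑ A : Finset (Fin p), (if A.card ≤ D ∧ k₁ ≤ (A ∩ Sstar).card then lawNotJ p D Sb A else 0)
      ≤ (Sstar.card.choose k₁ : ℝ) *
          (2 * (((D + 1).choose (k₁ + 1) : ℝ) / (D * (p.choose k₁)))) := by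
  classical
  have hstep1 : ∀ A : Finset (Fin p),
      (if A.card ≤ D ∧ k₁ ≤ (A ∩ Sstar).card then lawNotJ p D Sb A else 0)
        ≤ ∑ T ∈ Sstar.powersetCard k₁,
            (if T ⊆ A ∧ A.card ≤ D then 2 / ((D:ℝ) * (p.choose A.card)) else 0) := by
    intro A
    have hnn : ∀ T ∈ Sstar.powersetCard k₁,
        0 ≤ (if T ⊆ A ∧ A.card ≤ D then 2 / ((D:ℝ) * (p.choose A.card)) else 0) := by
      intro T _; split
      · positivity
      · exact le_refl 0
    split_ifs with hA
    · obtain ⟨T, hTsub, hTcard⟩ := Finset.exists_subset_card_eq hA.2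
      have hTmem : T ∈ Sstar.powersetCard k₁ :=
        Finset.mem_powersetCard.mpr ⟨hTsub.trans Finset.inter_subset_right, hTcard⟩
      have hTA : T ⊆ A := hTsub.trans Finset.inter_subset_left
      have hC : (0:ℝ) < (p.choose A.card : ℝ) := by
        exact_mod_cast Nat.choose_pos (hA.1.trans hDp)
      have hD0 : (0:ℝ) < (D:ℝ) := by exact_mod_cast hD
      have key : lawNotJ p D Sb A ≤ 2 / ((D:ℝ) * (p.choose A.card)) := by
        unfold lawNotJ
        split_ifs with hsup
        · have h1 : (1:ℝ) / (1 - pjOf p D Sb) ≤ 2 := by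
            rw [div_le_iff₀ (by linarith)]; linarith
          calc (1:ℝ) / (D * (1 - pjOf p D Sb) * (p.choose A.card))
              = 1 / ((1 - pjOf p D Sb) * ((D:ℝ) * (p.choose A.card))) := by
                rw [show (D:ℝ) * (1 - pjOf p D Sb) * (p.choose A.card)
                  = (1 - pjOf p D Sb) * ((D:ℝ) * (p.choose A.card)) by ring]
            _ = (1 / (1 - pjOf p D Sb)) * (1 / ((D:ℝ) * (p.choose A.card))) := by
                rw [div_mul_div_comm, one_mul]
            _ ≤ 2 * (1 / ((D:ℝ) * (p.choose A.card))) := by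
                apply mul_le_mul_of_nonneg_right h1 (by positivity)
            _ = 2 / ((D:ℝ) * (p.choose A.card)) := by ring
        · positivity
      calc lawNotJ p D Sb A ≤ 2 / ((D:ℝ) * (p.choose A.card)) := key
        _ = (if T ⊆ A ∧ A.card ≤ D then 2 / ((D:ℝ) * (p.choose A.card)) else 0) := by
            rw [if_pos ⟨hTA, hA.1⟩]
        _ ≤ _ := Finset.single_le_sum hnn hTmem
    · exact Finset.sum_nonneg hnn
  calc ∑ A : Finset (Fin p), (if A.card ≤ D ∧ k₁ ≤ (A ∩ Sstar).card then lawNotJ p D Sb A else 0)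
      ≤ ∑ A : Finset (Fin p), ∑ T ∈ Sstar.powersetCard k₁,
          (if T ⊆ A ∧ A.card ≤ D then 2 / ((D:ℝ) * (p.choose A.card)) else 0) :=
        Finset.sum_le_sum fun A _ => hstep1 A
    _ = ∑ T ∈ Sstar.powersetCard k₁, ∑ A : Finset (Fin p),
          (if T ⊆ A ∧ A.card ≤ D then 2 / ((D:ℝ) * (p.choose A.card)) else 0) :=
        Finset.sum_comm
    _ = ∑ T ∈ Sstar.powersetCard k₁,
          (2 * (((D + 1).choose (k₁ + 1) : ℝ) / (D * (p.choose k₁)))) := by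
        apply Finset.sum_congr rfl
        intro T hT
        have hTc := (Finset.mem_powersetCard.mp hT).2
        rw [aux_sum_ite_const T 2, aux_pjOf_closed T (hTc ▸ hk₁D) hDp, hTc]
    _ = (Sstar.card.choose k₁ : ℝ) *
          (2 * (((D + 1).choose (k₁ + 1) : ℝ) / (D * (p.choose k₁)))) := by
        rw [Finset.sum_const, Finset.card_powersetCard, nsmul_eq_mul]


lemma aux_ratio_ge (k D p : ℕ) (h2k : 2 * (k + 1) ≤ D) (hDp : D ≤ p) :
    ((D:ℝ) / (2 * p)) ^ k / (2 * (k + 1)) ≤ ((D + 1).choose (k + 1) : ℝ) / (D * (p.choose k)) := by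
  have hD0 : (0:ℝ) < D := by exact_mod_cast (by omega : 0 < D)
  have hp0 : (0:ℝ) < p := by exact_mod_cast (by omega : 0 < p)
  have hkp : k ≤ p := by omega
  have hsub : D + 1 + 1 - (k + 1) = D + 1 - k := by omega
  have hx := Nat.pow_le_choose (α := ℝ) (k + 1) (D + 1)
  rw [hsub] at hx
  have hy : ((p.choose k : ℕ) : ℝ) ≤ (p:ℝ) ^ k / k.factorial := Nat.choose_le_pow_div k p
  have hy0 : (0:ℝ) < ((p.choose k : ℕ) : ℝ) := by exact_mod_cast Nat.choose_pos hkp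
  have hfac : (0:ℝ) < (k.factorial : ℝ) := by exact_mod_cast k.factorial_pos
  have hfac1 : (0:ℝ) < ((k+1).factorial : ℝ) := by exact_mod_cast (k+1).factorial_pos
  have hstep : (((D + 1 - k : ℕ) : ℝ) ^ (k+1) / ((k+1).factorial : ℝ)) / ((D:ℝ) * ((p:ℝ) ^ k / k.factorial))
      ≤ ((D + 1).choose (k + 1) : ℝ) / (D * (p.choose k)) := by
    apply div_le_div₀ (by positivity) hx (by positivity)
    exact mul_le_mul_of_nonneg_left hy hD0.le
  refine le_trans ?_ hstep
  have hA : (D:ℝ) / 2 ≤ ((D + 1 - k : ℕ) : ℝ) := by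
    have h1 : (((D + 1 - k : ℕ)) : ℝ) = (D:ℝ) + 1 - k := by
      rw [Nat.cast_sub (by omega)]; push_cast; ring
    rw [h1]
    have : (k:ℝ) ≤ (D:ℝ) / 2 - 1 + 1/2 := by
      have : (2:ℝ) * (k + 1) ≤ D := by exact_mod_cast h2k
      linarith
    linarith
  have hpow : ((D:ℝ) / 2) ^ (k+1) ≤ ((D + 1 - k : ℕ) : ℝ) ^ (k+1) :=
    pow_le_pow_left₀ (by positivity) hA _
  calc ((D:ℝ) / (2 * p)) ^ k / (2 * (k + 1))
      = (((D:ℝ) / 2) ^ (k+1) / ((k+1).factorial : ℝ)) / ((D:ℝ) * ((p:ℝ) ^ k / k.factorial)) := by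
        rw [Nat.factorial_succ]
        push_cast
        simp only [div_pow, mul_pow]
        field_simp
        ring
    _ ≤ (((D + 1 - k : ℕ) : ℝ) ^ (k+1) / ((k+1).factorial : ℝ)) / ((D:ℝ) * ((p:ℝ) ^ k / k.factorial)) := by
        exact div_le_div_of_nonneg_right (div_le_div_of_nonneg_right hpow hfac1.le) (by positivity)
    _ ≤ _ := le_refl _

lemma aux_ratio_le (k D p : ℕ) (hk1 : 1 ≤ k) (hkD : k ≤ D) (h2kp : 2 * k ≤ p) (hD : 1 ≤ D) :
    ((D + 1).choose (k + 1) : ℝ) / (D * (p.choose k)) ≤ 2 ^ (2 * k + 1) * ((D:ℝ) / p) ^ k := by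
  have hD0 : (0:ℝ) < D := by exact_mod_cast hD
  have hp0 : (0:ℝ) < p := by exact_mod_cast (by omega : 0 < p)
  have hkp : k ≤ p := by omega
  have hfac : (0:ℝ) < (k.factorial : ℝ) := by exact_mod_cast k.factorial_pos
  have hfac1 : (0:ℝ) < ((k+1).factorial : ℝ) := by exact_mod_cast (k+1).factorial_pos
  have hx : ((D + 1).choose (k + 1) : ℝ) ≤ ((D:ℝ) + 1) ^ (k+1) / ((k+1).factorial : ℝ) := by
    have := Nat.choose_le_pow_div (α := ℝ) (k+1) (D+1)
    push_cast at this ⊢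
    exact this
  have hx2 : ((D:ℝ) + 1) ^ (k+1) ≤ (2 * (D:ℝ)) ^ (k+1) :=
    pow_le_pow_left₀ (by positivity) (by
      have hD1 : (1:ℝ) ≤ (D:ℝ) := by exact_mod_cast hD
      linarith) _
  have hy := Nat.pow_le_choose (α := ℝ) k p
  have hpk : ((p:ℝ) / 2) ^ k ≤ ((p + 1 - k : ℕ) : ℝ) ^ k := by
    apply pow_le_pow_left₀ (by positivity)
    have h1 : (((p + 1 - k : ℕ)) : ℝ) = (p:ℝ) + 1 - k := by
      rw [Nat.cast_sub (by omega)]; push_cast; ring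
    rw [h1]
    have : (k:ℝ) ≤ (p:ℝ) / 2 + 1 := by
      have : (2:ℝ) * k ≤ p := by exact_mod_cast h2kp
      linarith
    linarith
  have hy2 : ((p:ℝ) / 2) ^ k / (k.factorial : ℝ) ≤ ((p.choose k : ℕ) : ℝ) :=
    le_trans (div_le_div_of_nonneg_right hpk hfac.le) hy
  have hstep : ((D + 1).choose (k + 1) : ℝ) / (D * (p.choose k))
      ≤ ((2 * (D:ℝ)) ^ (k+1) / ((k+1).factorial : ℝ)) / ((D:ℝ) * (((p:ℝ) / 2) ^ k / k.factorial)) := by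
    apply div_le_div₀ (by positivity) (hx.trans (div_le_div_of_nonneg_right hx2 hfac1.le)) (by positivity)
    exact mul_le_mul_of_nonneg_left hy2 hD0.le
  refine hstep.trans ?_
  have heq : ((2 * (D:ℝ)) ^ (k+1) / ((k+1).factorial : ℝ)) / ((D:ℝ) * (((p:ℝ) / 2) ^ k / k.factorial))
      = (2 ^ (2 * k + 1) * ((D:ℝ) / p) ^ k) / ((k:ℝ) + 1) := by
    rw [Nat.factorial_succ]
    push_cast
    simp only [div_pow, mul_pow]
    field_simp
    ring
  rw [heq]
  exact div_le_self (by positivity) (by push_cast; linarith)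


open Classical in
def stmtTfun (p : ℕ) (Sstar S0 : Finset (Fin p)) (j : Fin p) : Fin p :=
  if j ∈ S0 then
    (if h : (Sstar \ S0).Nonempty then h.choose
     else (if h2 : S0.Nonempty then h2.choose else j))
  else j

open Classical in
def stmtSbar (p D s0 : ℕ) (Sstar S0 : Finset (Fin p)) (j : Fin p) : Finset (Fin p) :=
  if 2 * (s0 + 2) ≤ D then S0 ∪ {stmtTfun p Sstar S0 j} else {j}

lemma stmt_key {p D s0 : ℕ} (Sstar S0 : Finset (Fin p)) (hS0sub : S0 ⊆ Sstar)
    (hn : 2 * (s0 + 2) ≤ D) (j : Fin p) (hj : j ∈ Sstar) :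
    ∃ t : Fin p, stmtSbar p D s0 Sstar S0 j = S0 ∪ {t} ∧ t ∈ Sstar ∧ j ∈ S0 ∪ {t}
      ∧ (t ∉ S0 ∨ S0 = Sstar) := by
  classical
  refine ⟨stmtTfun p Sstar S0 j, by rw [stmtSbar, if_pos hn], ?_⟩
  rw [stmtTfun]
  by_cases hjS0 : j ∈ S0
  · rw [if_pos hjS0]
    by_cases h : (Sstar \ S0).Nonempty
    · rw [dif_pos h]
      have hspec := h.choose_spec
      rw [Finset.mem_sdiff] at hspec
      exact ⟨hspec.1, Finset.mem_union_left _ hjS0, Or.inl hspec.2⟩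
    · have hS0S : S0 = Sstar := by
        apply Finset.Subset.antisymm hS0sub
        intro x hx
        by_contra hxx
        exact h ⟨x, Finset.mem_sdiff.mpr ⟨hx, hxx⟩⟩
      rw [dif_neg h]
      have h2 : S0.Nonempty := ⟨j, hjS0⟩
      rw [dif_pos h2]
      exact ⟨hS0S ▸ h2.choose_spec, Finset.mem_union_left _ hjS0, Or.inr hS0S⟩
  · rw [if_neg hjS0]
    exact ⟨hj, Finset.mem_union_right _ (Finset.mem_singleton_self j), Or.inl hjS0⟩

end Stmt18Aux

/-- Proposition A.1(i): under Assumption A for the decomposition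
`S* = S*_{[0]} ∪ S*_{[1]}`, whenever `B₂ ≍ (p/D)^{|S*_{[0]}|+1}`, Assumption 1 holds. -/
theorem stmt_18 (p D B₂ : ℕ → ℕ) (pstar s0 s1 : ℕ) (hpstar : 1 ≤ pstar)
    (hD : ∀ n, 1 ≤ D n) (hDp : ∀ n, D n ≤ p n)
    (hDtop : Tendsto D atTop atTop)
    (hDp0 : Tendsto (fun n => (D n : ℝ) / (p n : ℝ)) atTop (nhds 0))
    (hB₂pos : ∀ n, 1 ≤ B₂ n)
    -- `B₂ ≍ (p/D)^{|S*_{[0]}|+1}`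
    (hB₂ : ∃ c C : ℝ, 0 < c ∧ c ≤ C ∧ ∀ n,
      c * ((p n : ℝ) / (D n : ℝ)) ^ (s0 + 1) ≤ (B₂ n : ℝ) ∧
      (B₂ n : ℝ) ≤ C * ((p n : ℝ) / (D n : ℝ)) ^ (s0 + 1))
    -- the signal set and its decomposition
    (Sstar S0 S1 : ∀ n, Finset (Fin (p n)))
    (hScard : ∀ n, (Sstar n).card = pstar)
    (hS0card : ∀ n, (S0 n).card = s0) (hS1card : ∀ n, (S1 n).card = s1)
    (hdecomp : ∀ n, Sstar n = S0 n ∪ S1 n)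
    (Cr : ∀ n, Finset (Fin (p n)) → ℝ) (εn : ℕ → ℝ) (hεn : ∀ n, 0 ≤ εn n)
    -- Assumption A (a)
    (hA0 : ∀ n, ∀ j ∈ S0 n, ∀ d : ℕ, 1 ≤ d →
      ∀ S S' : Finset (Fin (p n)), S.card ≤ D n → S'.card ≤ D n →
        (S ∩ Sstar n).card < d → d ≤ (S' ∩ Sstar n).card → j ∈ S' → j ∉ S →
        2 * εn n < Cr n S - Cr n S')
    -- Assumption A (b)
    (hA1 : ∀ n, ∀ j ∈ S1 n, ∀ d : ℕ, s0 + 1 ≤ d →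
      ∀ S S' : Finset (Fin (p n)), S.card ≤ D n → S'.card ≤ D n →
        (S ∩ Sstar n).card < d → d ≤ (S' ∩ Sstar n).card → j ∈ S' → j ∉ S →
        2 * εn n < Cr n S - Cr n S') :
    ∃ Sbar : ∀ n, Fin (p n) → Finset (Fin (p n)),
      (∀ n, ∀ j ∈ Sstar n, j ∈ Sbar n j ∧ (Sbar n j).card ≤ D n)
      ∧ (∃ c : ℝ, 0 < c ∧ ∀ᶠ n in atTop,
          c ≤ (B₂ n : ℝ) * ⨅ j : {j // j ∈ Sstar n}, pjOf (p n) (D n) (Sbar n j.1))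
      ∧ (∃ M : ℝ, ∀ᶠ n in atTop,
          (B₂ n : ℝ) *
            ⨆ j : {j // j ∈ Sstar n}, ETerm (p n) (D n) (B₂ n) (Cr n) (εn n) (Sbar n j.1)
          ≤ M) := by
  classical
  obtain ⟨c, C, hc, hcC, hB2b⟩ := hB₂
  have hp1 : ∀ n, 1 ≤ p n := fun n => (hD n).trans (hDp n)
  have hS0sub : ∀ n, S0 n ⊆ Sstar n := fun n => by
    rw [hdecomp n]; exact Finset.subset_union_left
  have hSne : ∀ n, ∃ j, j ∈ Sstar n := fun n => by
    have h0 : 0 < (Sstar n).card := by rw [hScard n]; omega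
    obtain ⟨j, hj⟩ := Finset.card_pos.mp h0
    exact ⟨j, hj⟩
  refine ⟨fun n j => stmtSbar (p n) (D n) s0 (Sstar n) (S0 n) j, ?_, ?_, ?_⟩
  · -- bullet 1
    dsimp only
    intro n j hj
    by_cases hn : 2 * (s0 + 2) ≤ D n
    · obtain ⟨t, hSb, htS, hjmem, _⟩ := stmt_key (Sstar n) (S0 n) (hS0sub n) hn j hj
      rw [hSb]
      refine ⟨hjmem, ?_⟩
      calc (S0 n ∪ {t}).card ≤ (S0 n).card + ({t} : Finset (Fin (p n))).card :=
            Finset.card_union_le _ _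
        _ = s0 + 1 := by rw [hS0card n, Finset.card_singleton]
        _ ≤ D n := by omega
    · rw [stmtSbar, if_neg hn]
      exact ⟨Finset.mem_singleton_self j, by rw [Finset.card_singleton]; exact hD n⟩
  · -- bullet 2
    dsimp only
    refine ⟨c * (1/2 : ℝ) ^ (s0+1) / (2 * (s0 + 2)), by positivity, ?_⟩
    filter_upwards [hDtop.eventually_ge_atTop (2 * (s0 + 2))] with n hn
    have hp0 : (0:ℝ) < p n := by exact_mod_cast hp1 n
    have hD0 : (0:ℝ) < D n := by exact_mod_cast hD n
    have hDpR : (D n : ℝ) ≤ p n := by exact_mod_cast hDp n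
    haveI hne : Nonempty {j // j ∈ Sstar n} := by
      obtain ⟨j, hj⟩ := hSne n; exact ⟨⟨j, hj⟩⟩
    have hmlb : ∀ j : {j // j ∈ Sstar n},
        ((D n:ℝ)/(2 * p n))^(s0+1)/(2*(s0+2))
          ≤ pjOf (p n) (D n) (stmtSbar (p n) (D n) s0 (Sstar n) (S0 n) j.1) := by
      rintro ⟨j, hj⟩
      obtain ⟨t, hSb, htS, hjmem, _⟩ := stmt_key (Sstar n) (S0 n) (hS0sub n) hn j hj
      rw [hSb]
      have hk1 : 1 ≤ (S0 n ∪ {t}).card :=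
        Finset.card_pos.mpr ⟨t, Finset.mem_union_right _ (Finset.mem_singleton_self t)⟩
      have hk2 : (S0 n ∪ {t}).card ≤ s0 + 1 := by
        calc (S0 n ∪ {t}).card ≤ (S0 n).card + ({t} : Finset (Fin (p n))).card :=
              Finset.card_union_le _ _
          _ = s0 + 1 := by rw [hS0card n, Finset.card_singleton]
      have h2k : 2 * ((S0 n ∪ {t}).card + 1) ≤ D n := by omega
      have hx1 : (0:ℝ) ≤ (D n : ℝ)/(2 * p n) := by positivity
      have hx2 : (D n : ℝ)/(2 * p n) ≤ 1 := by
        rw [div_le_one (by positivity)]; linarith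
      calc ((D n:ℝ)/(2 * p n))^(s0+1)/(2*(s0+2))
          ≤ ((D n:ℝ)/(2 * p n))^((S0 n ∪ {t}).card)/(2*((S0 n ∪ {t}).card+1)) := by
            apply div_le_div₀ (by positivity)
              (pow_le_pow_of_le_one hx1 hx2 (by omega)) (by have : (0:ℝ) ≤ ((S0 n ∪ {t}).card : ℝ) := Nat.cast_nonneg _; linarith)
            have : ((S0 n ∪ {t}).card : ℝ) ≤ (s0:ℝ) + 1 := by exact_mod_cast hk2
            linarith
        _ ≤ ((D n + 1).choose ((S0 n ∪ {t}).card+1) : ℝ)/(D n * ((p n).choose ((S0 n ∪ {t}).card))) :=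
            aux_ratio_ge _ (D n) (p n) h2k (hDp n)
        _ = pjOf (p n) (D n) (S0 n ∪ {t}) := (aux_pjOf_closed _ (by omega) (hDp n)).symm
    have hInf := le_ciInf hmlb
    have hB2nn : (0:ℝ) ≤ B₂ n := Nat.cast_nonneg _
    calc c * (1/2 : ℝ)^(s0+1)/(2*(s0+2))
        = (c * ((p n:ℝ)/(D n))^(s0+1)) * (((D n:ℝ)/(2 * p n))^(s0+1)/(2*(s0+2))) := by
          have hhalf : ((p n:ℝ)/(D n)) * ((D n:ℝ)/(2 * p n)) = 1/2 := by
            field_simp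
          rw [show (c * ((p n:ℝ)/(D n))^(s0+1)) * (((D n:ℝ)/(2 * p n))^(s0+1)/(2*(s0+2)))
            = c * (((p n:ℝ)/(D n)) * ((D n:ℝ)/(2 * p n)))^(s0+1)/(2*(s0+2)) by
              rw [mul_pow]; ring]
          rw [hhalf]
      _ ≤ (B₂ n : ℝ) * (((D n:ℝ)/(2 * p n))^(s0+1)/(2*(s0+2))) :=
          mul_le_mul_of_nonneg_right (hB2b n).1 (by positivity)
      _ ≤ (B₂ n : ℝ) * ⨅ j : {j // j ∈ Sstar n},
            pjOf (p n) (D n) (stmtSbar (p n) (D n) s0 (Sstar n) (S0 n) j.1) :=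
          mul_le_mul_of_nonneg_left hInf hB2nn
  · -- bullet 3
    dsimp only
    refine ⟨C * (pstar.choose (s0+1) : ℝ) * 2 ^ (2*s0+4), ?_⟩
    have hev2 : ∀ᶠ n in atTop, (D n : ℝ)/(p n) < (1/2 : ℝ)^(2*s0+4) :=
      hDp0.eventually_lt_const (by positivity)
    filter_upwards [hDtop.eventually_ge_atTop (2 * (s0 + 2)), hev2] with n hn hdp
    have hp0 : (0:ℝ) < p n := by exact_mod_cast hp1 n
    have hD0 : (0:ℝ) < D n := by exact_mod_cast hD n
    have hDpR : (D n : ℝ) ≤ p n := by exact_mod_cast hDp n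
    have hB2R : (0:ℝ) < B₂ n := by exact_mod_cast hB₂pos n
    haveI hne : Nonempty {j // j ∈ Sstar n} := by
      obtain ⟨j, hj⟩ := hSne n; exact ⟨⟨j, hj⟩⟩
    have hjb : ∀ j : {j // j ∈ Sstar n},
        (B₂ n : ℝ) * ETerm (p n) (D n) (B₂ n) (Cr n) (εn n)
            (stmtSbar (p n) (D n) s0 (Sstar n) (S0 n) j.1)
          ≤ C * (pstar.choose (s0+1) : ℝ) * 2 ^ (2*s0+4) := by
      rintro ⟨j, hj⟩
      obtain ⟨t, hSb, htS, hjmem, hdisj⟩ := stmt_key (Sstar n) (S0 n) (hS0sub n) hn j hj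
      rw [hSb]
      have hk1 : 1 ≤ (S0 n ∪ {t}).card :=
        Finset.card_pos.mpr ⟨t, Finset.mem_union_right _ (Finset.mem_singleton_self t)⟩
      have hk2 : (S0 n ∪ {t}).card ≤ s0 + 1 := by
        calc (S0 n ∪ {t}).card ≤ (S0 n).card + ({t} : Finset (Fin (p n))).card :=
              Finset.card_union_le _ _
          _ = s0 + 1 := by rw [hS0card n, Finset.card_singleton]
      have hkD : (S0 n ∪ {t}).card ≤ D n := by omega
      have hpjpos : 0 < pjOf (p n) (D n) (S0 n ∪ {t}) :=
        aux_pjOf_pos _ (hD n) hkD (hDp n)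
      have hdpnn : (0:ℝ) ≤ (D n:ℝ)/(p n) := by positivity
      have hdple1 : (D n:ℝ)/(p n) ≤ 1 := by rw [div_le_one hp0]; exact hDpR
      have hpjle : pjOf (p n) (D n) (S0 n ∪ {t}) ≤ 1/2 := by
        rw [aux_pjOf_closed _ hkD (hDp n)]
        calc ((D n + 1).choose ((S0 n ∪ {t}).card+1):ℝ)/(D n * ((p n).choose ((S0 n ∪ {t}).card)))
            ≤ 2^(2*(S0 n ∪ {t}).card+1) * ((D n:ℝ)/(p n))^((S0 n ∪ {t}).card) :=
              aux_ratio_le _ (D n) (p n) hk1 hkD (by have := hDp n; omega) (hD n)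
          _ ≤ 2^(2*s0+3) * ((D n:ℝ)/(p n)) := by
              apply mul_le_mul
              · apply pow_le_pow_right₀ one_le_two (by omega)
              · calc ((D n:ℝ)/(p n))^((S0 n ∪ {t}).card) ≤ ((D n:ℝ)/(p n))^1 :=
                    pow_le_pow_of_le_one hdpnn hdple1 hk1
                  _ = (D n:ℝ)/(p n) := pow_one _
              · positivity
              · positivity
          _ ≤ 2^(2*s0+3) * (1/2 : ℝ)^(2*s0+4) :=
              mul_le_mul_of_nonneg_left hdp.le (by positivity)
          _ = 1/2 := by
              rw [show 2*s0+4 = (2*s0+3)+1 by omega, pow_succ (1/2:ℝ) (2*s0+3),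
                ← mul_assoc, ← mul_pow]
              norm_num
      have hepos : 0 < (B₂ n : ℝ) * pjOf (p n) (D n) (S0 n ∪ {t}) / 2 := by positivity
      have hA1' : ∀ t' ∈ Sstar n, t' ∉ S0 n → ∀ S S' : Finset (Fin (p n)),
          S.card ≤ D n → S'.card ≤ D n → (S ∩ Sstar n).card < s0 + 1 →
          s0 + 1 ≤ (S' ∩ Sstar n).card → t' ∈ S' → t' ∉ S →
          2 * εn n < Cr n S - Cr n S' := by
        intro t' ht' ht'S0
        have ht'S1 : t' ∈ S1 n := by
          have h := ht'
          rw [hdecomp n] at h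
          rcases Finset.mem_union.mp h with h' | h'
          · exact absurd h' ht'S0
          · exact h'
        exact hA1 n t' ht'S1 (s0+1) le_rfl
      have hE : ETerm (p n) (D n) (B₂ n) (Cr n) (εn n) (S0 n ∪ {t})
          ≤ ∑ A : Finset (Fin (p n)),
              (if A.card ≤ D n ∧ s0+1 ≤ (A ∩ Sstar n).card
                then lawNotJ (p n) (D n) (S0 n ∪ {t}) A else 0) := by
        unfold ETerm
        apply Finset.sum_le_sum
        intro A _
        have hlann : 0 ≤ lawNotJ (p n) (D n) (S0 n ∪ {t}) A := by
          unfold lawNotJ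
          split
          · apply div_nonneg zero_le_one
            apply mul_nonneg (mul_nonneg (Nat.cast_nonneg _) (by linarith)) (Nat.cast_nonneg _)
          · exact le_refl 0
        by_cases hbad : A.card ≤ D n ∧ s0+1 ≤ (A ∩ Sstar n).card
        · rw [if_pos hbad]
          have hrp := Real.rpow_le_one (aux_deltaJ_nonneg (Cr n) (εn n) (S0 n ∪ {t}) A)
            (aux_deltaJ_le_one (Cr n) (εn n) (S0 n ∪ {t}) A (hD n) hkD (hDp n)) hepos.le
          calc lawNotJ (p n) (D n) (S0 n ∪ {t}) A
                * (deltaJ (p n) (D n) (Cr n) (εn n) (S0 n ∪ {t}) A)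
                    ^ ((B₂ n : ℝ) * pjOf (p n) (D n) (S0 n ∪ {t}) / 2)
              ≤ lawNotJ (p n) (D n) (S0 n ∪ {t}) A * 1 :=
                mul_le_mul_of_nonneg_left hrp hlann
            _ = lawNotJ (p n) (D n) (S0 n ∪ {t}) A := mul_one _
        · rw [if_neg hbad]
          by_cases hsupp : 1 ≤ A.card ∧ A.card ≤ D n ∧ ¬ (S0 n ∪ {t}) ⊆ A
          · push_neg at hbad
            have hAcard : (A ∩ Sstar n).card ≤ s0 := by
              have := hbad hsupp.2.1; omega
            have hlt : (A ∩ Sstar n).card < (S0 n ∪ {t}).card := by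
              rcases hdisj with hts | hS0eq
              · have hcSb : (S0 n ∪ {t}).card = s0+1 := by
                  rw [Finset.union_comm, ← Finset.insert_eq,
                    Finset.card_insert_of_notMem hts, hS0card n]
                omega
              · have hps : pstar = s0 := by rw [← hScard n, ← hS0eq, hS0card n]
                by_contra hge
                push_neg at hge
                have h1 : s0 ≤ (S0 n ∪ {t}).card := by
                  rw [← hS0card n]
                  exact Finset.card_le_card Finset.subset_union_left
                have h2 : (Sstar n).card ≤ (A ∩ Sstar n).card := by
                  rw [hScard n]; omega
                have h3 : A ∩ Sstar n = Sstar n :=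
                  Finset.eq_of_subset_of_card_le Finset.inter_subset_right h2
                have h4 : Sstar n ⊆ A := by
                  rw [← h3]; exact Finset.inter_subset_left
                apply hsupp.2.2
                exact Finset.union_subset ((hS0sub n).trans h4)
                  (Finset.singleton_subset_iff.mpr (h4 htS))
            have hdel0 : deltaJ (p n) (D n) (Cr n) (εn n) (S0 n ∪ {t}) A = 0 :=
              aux_deltaJ_vanish (Sstar n) (S0 n) (hS0card n) (hS0sub n) (hA0 n) hA1'
                t htS A hsupp.2.1 hsupp.2.2 hlt
            rw [hdel0, Real.zero_rpow hepos.ne', mul_zero]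
          · have hz : lawNotJ (p n) (D n) (S0 n ∪ {t}) A = 0 := by
              unfold lawNotJ; rw [if_neg hsupp]
            rw [hz, zero_mul]
      have hbadle := aux_sum_bad (Sstar n) (S0 n ∪ {t}) (s0+1) (hD n) (hDp n) (by omega) hpjle
      rw [hScard n] at hbadle
      have hrat := aux_ratio_le (s0+1) (D n) (p n) (by omega) (by omega)
        (by have := hDp n; omega) (hD n)
      calc (B₂ n : ℝ) * ETerm (p n) (D n) (B₂ n) (Cr n) (εn n) (S0 n ∪ {t})
          ≤ (B₂ n : ℝ) * ((pstar.choose (s0+1) : ℝ)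
              * (2 * (2^(2*(s0+1)+1) * ((D n:ℝ)/(p n))^(s0+1)))) := by
            apply mul_le_mul_of_nonneg_left ?_ hB2R.le
            refine (hE.trans hbadle).trans ?_
            apply mul_le_mul_of_nonneg_left ?_ (Nat.cast_nonneg _)
            apply mul_le_mul_of_nonneg_left hrat (by norm_num)
        _ ≤ (C * ((p n:ℝ)/(D n))^(s0+1)) * ((pstar.choose (s0+1) : ℝ)
              * (2 * (2^(2*(s0+1)+1) * ((D n:ℝ)/(p n))^(s0+1)))) :=
            mul_le_mul_of_nonneg_right (hB2b n).2 (by positivity)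
        _ = C * (pstar.choose (s0+1) : ℝ) * 2^(2*s0+4)
              * (((p n:ℝ)/(D n)) * ((D n:ℝ)/(p n)))^(s0+1) := by
            rw [mul_pow]; ring
        _ = C * (pstar.choose (s0+1) : ℝ) * 2^(2*s0+4) := by
            rw [show ((p n:ℝ)/(D n)) * ((D n:ℝ)/(p n)) = 1 by field_simp, one_pow, mul_one]
    have hsup : (⨆ j : {j // j ∈ Sstar n}, ETerm (p n) (D n) (B₂ n) (Cr n) (εn n)
          (stmtSbar (p n) (D n) s0 (Sstar n) (S0 n) j.1))
        ≤ (C * (pstar.choose (s0+1) : ℝ) * 2 ^ (2*s0+4)) / (B₂ n) := by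
      apply ciSup_le
      intro j
      rw [le_div_iff₀ hB2R]
      rw [mul_comm]
      exact hjb j
    calc (B₂ n : ℝ) * ⨆ j : {j // j ∈ Sstar n}, ETerm (p n) (D n) (B₂ n) (Cr n) (εn n)
            (stmtSbar (p n) (D n) s0 (Sstar n) (S0 n) j.1)
        ≤ (B₂ n : ℝ) * ((C * (pstar.choose (s0+1) : ℝ) * 2 ^ (2*s0+4)) / (B₂ n)) :=
          mul_le_mul_of_nonneg_left hsup hB2R.le
      _ = C * (pstar.choose (s0+1) : ℝ) * 2 ^ (2*s0+4) := by
          rw [mul_comm, div_mul_cancel₀ _ hB2R.ne']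


end
end
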